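/- arXiv:0911.2766 — 7 statements merged into one kernel-verified Lean document; each statement's English description precedes it below -/
import Mathlib

section
/- There is a universal constant C > 0 such that for every α ∈ ℝ and every F ∈ Ŝ_{α,0}: the half-plane H_C is contained in the image F(H_0), the inverse map F^{−1} is univalent on H_C, and for every z with Im z ≥ C one has |F^{−1}(z) − (z − α)| ≤ C·e^{−2π Im z} and |(F^{−1})′(z) − 1| ≤ C·e^{−2π Im z}. -/
/-- `Ŝ_{α,y}`: the set of maps `F` univalent (holomorphic and injective) on the half-plane
`H_y = {Im z > y}`, commuting with the translation by one, and with
`F(z) - (z + α) → 0` as `Im z → +∞`, uniformly in `Re z`. -/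
def SHat (α y : ℝ) (F : ℂ → ℂ) : Prop :=
  DifferentiableOn ℂ F {z : ℂ | y < z.im} ∧
  Set.InjOn F {z : ℂ | y < z.im} ∧
  (∀ z : ℂ, y < z.im → F (z + 1) = F z + 1) ∧
  (∀ ε : ℝ, 0 < ε → ∃ Y : ℝ, y < Y ∧ ∀ z : ℂ, Y ≤ z.im → ‖F z - (z + (α : ℂ))‖ ≤ ε)

open Complex Metric Set Filter Function Topology

noncomputable section

namespace ShatAux

/-- Minimum modulus principle: if `‖f‖` is smaller at the center than everywhere on the
bounding sphere, then `f` has a zero in the open ball. -/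
lemma exists_zero_of_frontier {f : ℂ → ℂ} {c : ℂ} {r m : ℝ} (hr : 0 < r)
    (hd : DifferentiableOn ℂ f (closedBall c r))
    (hc : ‖f c‖ < m) (hb : ∀ z ∈ sphere c r, m ≤ ‖f z‖) :
    ∃ z ∈ ball c r, f z = 0 := by
  by_contra hno
  push_neg at hno
  have hm : 0 < m := lt_of_le_of_lt (norm_nonneg _) hc
  have hne : ∀ z ∈ closedBall c r, f z ≠ 0 := by
    intro z hz
    rcases lt_or_eq_of_le (mem_closedBall.1 hz) with h | h
    · exact hno z (mem_ball.2 h)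
    · have : z ∈ sphere c r := mem_sphere.2 h
      intro h0
      have := hb z this
      rw [h0, norm_zero] at this
      exact absurd this (not_le.2 hm)
  have hdc : DiffContOnCl ℂ (fun z => (f z)⁻¹) (ball c r) := by
    refine ⟨fun z hz => ((hd z (ball_subset_closedBall hz)).mono ball_subset_closedBall).inv
      (hne z (ball_subset_closedBall hz)), ?_⟩
    rw [closure_ball c hr.ne']
    exact (hd.continuousOn).inv₀ hne
  have hfc : f c ≠ 0 := hne c (mem_closedBall_self hr.le)
  have key : ‖(f c)⁻¹‖ ≤ m⁻¹ := by
    refine Complex.norm_le_of_forall_mem_frontier_norm_le isBounded_ball hdc ?_ ?_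
    · intro z hz
      rw [frontier_ball c hr.ne'] at hz
      rw [norm_inv]
      exact inv_anti₀ hm (hb z hz)
    · rw [closure_ball c hr.ne']
      exact mem_closedBall_self hr.le
  rw [norm_inv] at key
  have : m ≤ ‖f c‖ := by
    have h1 : 0 < ‖f c‖ := norm_pos_iff.2 hfc
    exact (inv_le_inv₀ h1 hm).1 key
  exact absurd hc (not_lt.2 this)


/-- Maximum modulus on a closed ball from a bound on the bounding sphere. -/
lemma maxmod {f : ℂ → ℂ} {s M : ℝ} (hs : 0 < s)
    (hd : DifferentiableOn ℂ f (closedBall 0 s))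
    (hb : ∀ z ∈ sphere (0 : ℂ) s, ‖f z‖ ≤ M) :
    ∀ z ∈ closedBall (0 : ℂ) s, ‖f z‖ ≤ M := by
  intro z hz
  refine Complex.norm_le_of_forall_mem_frontier_norm_le isBounded_ball
    ⟨hd.mono ball_subset_closedBall, ?_⟩ ?_ ?_
  · rw [closure_ball (0 : ℂ) hs.ne']
    exact hd.continuousOn
  · intro w hw
    rw [frontier_ball (0 : ℂ) hs.ne'] at hw
    exact hb w hw
  · rwa [closure_ball (0 : ℂ) hs.ne']

lemma dslope_diffOn {f : ℂ → ℂ} {R : ℝ} (hR : 0 < R)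
    (hd : DifferentiableOn ℂ f (ball 0 R)) :
    DifferentiableOn ℂ (dslope f 0) (ball 0 R) := by
  intro z hz
  rcases eq_or_ne z 0 with rfl | hne
  · obtain ⟨p, hp⟩ := hd.analyticAt (ball_mem_nhds _ hR)
    exact hp.has_fpower_series_dslope_fslope.analyticAt.differentiableAt.differentiableWithinAt
  · exact (differentiableWithinAt_dslope_of_ne hne).2 (hd z hz)

/-- Landau-type lemma: a holomorphic function on the unit ball vanishing at `0`, bounded
by `A`, attains every value of modulus less than `‖f'(0)‖ ^ 2 / (32 * A)`. -/
lemma landau {f : ℂ → ℂ} {A : ℝ}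
    (hd : DifferentiableOn ℂ f (ball 0 1)) (h0 : f 0 = 0)
    (hb : ∀ z ∈ ball (0 : ℂ) 1, ‖f z‖ ≤ A) :
    ∀ w : ℂ, ‖w‖ < ‖deriv f 0‖ ^ 2 / (32 * A) → ∃ z ∈ ball (0 : ℂ) 1, f z = w := by
  intro w hw
  set μ := ‖deriv f 0‖ with hμdef
  have hA0 : 0 ≤ A := le_trans (norm_nonneg _) (hb 0 (mem_ball_self one_pos))
  have hμpos : 0 < μ := by
    rcases eq_or_lt_of_le (norm_nonneg (deriv f 0)) with h | h
    · exfalso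
      rw [← hμdef] at h
      rw [← h] at hw
      simp only [ne_eq, OfNat.ofNat_ne_zero, not_false_eq_true, zero_pow, zero_div] at hw
      exact absurd hw (not_lt.2 (norm_nonneg w))
    · exact h
  have hApos : 0 < A := by
    rcases eq_or_lt_of_le hA0 with h | h
    · exfalso
      rw [← h] at hw
      norm_num at hw
      exact absurd hw (not_lt.2 (norm_nonneg w))
    · exact h
  set f₁ := dslope f 0 with hf₁def
  have hf₁d : DifferentiableOn ℂ f₁ (ball 0 1) := dslope_diffOn one_pos hd
  set k := dslope f₁ 0 with hkdef
  have hkd : DifferentiableOn ℂ k (ball 0 1) := dslope_diffOn one_pos hf₁d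
  have hsub34 : closedBall (0 : ℂ) (3/4) ⊆ ball 0 1 := closedBall_subset_ball (by norm_num)
  -- bound for f₁ on sphere 3/4 and hence on closed ball 3/4
  have hf₁sphere : ∀ z ∈ sphere (0 : ℂ) (3/4), ‖f₁ z‖ ≤ (4/3) * A := by
    intro z hz
    have hzn : ‖z‖ = 3/4 := by simpa using hz
    have hzne : z ≠ 0 := by intro h; rw [h] at hzn; norm_num at hzn
    have : f₁ z = z⁻¹ • (f z - f 0) := by
      rw [hf₁def, dslope_of_ne f hzne, slope_def_module]
      simp
    rw [this, h0, sub_zero, norm_smul, norm_inv, hzn]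
    have : ‖f z‖ ≤ A := hb z (hsub34 (sphere_subset_closedBall hz))
    nlinarith [norm_nonneg (f z)]
  have hf₁bd : ∀ z ∈ closedBall (0 : ℂ) (3/4), ‖f₁ z‖ ≤ (4/3) * A :=
    maxmod (by norm_num) (hf₁d.mono hsub34) hf₁sphere
  have hμA : μ ≤ (4/3) * A := by
    have := hf₁bd 0 (mem_closedBall_self (by norm_num))
    rwa [hf₁def, dslope_same] at this
  -- bound for k
  have hksphere : ∀ z ∈ sphere (0 : ℂ) (3/4), ‖k z‖ ≤ 4 * A := by
    intro z hz
    have hzn : ‖z‖ = 3/4 := by simpa using hz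
    have hzne : z ≠ 0 := by intro h; rw [h] at hzn; norm_num at hzn
    have hk : k z = z⁻¹ • (f₁ z - f₁ 0) := by
      rw [hkdef, dslope_of_ne f₁ hzne, slope_def_module]
      simp
    have h1 : ‖f₁ z‖ ≤ (4/3) * A := hf₁sphere z hz
    have h2 : ‖f₁ 0‖ ≤ (4/3) * A := by
      rw [hf₁def, dslope_same]; exact hμA
    rw [hk, norm_smul, norm_inv, hzn]
    have := norm_sub_le (f₁ z) (f₁ 0)
    nlinarith
  have hkbd : ∀ z ∈ closedBall (0 : ℂ) (3/4), ‖k z‖ ≤ 4 * A :=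
    maxmod (by norm_num) (hkd.mono hsub34) hksphere
  -- lower bound on the sphere of radius r
  set r := μ / (8 * A) with hrdef
  have hrpos : 0 < r := div_pos hμpos (by linarith)
  have hr16 : r ≤ 1/6 := by
    rw [hrdef, div_le_iff₀ (by linarith : (0:ℝ) < 8 * A)]
    nlinarith
  have hlow : ∀ z ∈ sphere (0 : ℂ) r, μ ^ 2 / (16 * A) ≤ ‖f z‖ := by
    intro z hz
    have hzn : ‖z‖ = r := by simpa using hz
    have hz34 : z ∈ closedBall (0 : ℂ) (3/4) := by
      rw [mem_closedBall, dist_zero_right, hzn]; linarith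
    have e1 : f z = z • f₁ z := by
      have := sub_smul_dslope f 0 z
      simp only [sub_zero, h0] at this
      rw [hf₁def]; exact this.symm
    have e2 : f₁ z = f₁ 0 + z • k z := by
      have h := sub_smul_dslope f₁ 0 z
      simp only [sub_zero] at h
      rw [← hkdef] at h
      rw [h]; ring
    have hf₁0 : ‖f₁ 0‖ = μ := by rw [hf₁def, dslope_same]
    have hkz : ‖k z‖ ≤ 4 * A := hkbd z hz34
    have h3 : μ - r * (4 * A) ≤ ‖f₁ z‖ := by
      have hμ' : μ = ‖f₁ 0‖ := hf₁0.symm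
      have h4 : ‖f₁ 0‖ ≤ ‖f₁ 0 + z • k z‖ + ‖z • k z‖ := by
        calc ‖f₁ 0‖ = ‖(f₁ 0 + z • k z) - z • k z‖ := by ring_nf
          _ ≤ ‖f₁ 0 + z • k z‖ + ‖z • k z‖ := norm_sub_le _ _
      have h5 : ‖z • k z‖ ≤ r * (4 * A) := by
        rw [norm_smul, hzn]
        exact mul_le_mul_of_nonneg_left hkz hrpos.le
      rw [← e2] at h4
      linarith
    have h6 : r * (4 * A) = μ / 2 := by
      rw [hrdef]; field_simp; ring
    have h7 : ‖f z‖ = r * ‖f₁ z‖ := by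
      rw [e1, norm_smul, hzn]
    rw [h7]
    have h8 : μ / 2 ≤ ‖f₁ z‖ := by rw [h6] at h3; linarith
    calc μ ^ 2 / (16 * A) = r * (μ / 2) := by rw [hrdef]; field_simp; ring
      _ ≤ r * ‖f₁ z‖ := mul_le_mul_of_nonneg_left h8 hrpos.le
  -- apply the minimum-modulus zero existence lemma
  have hsubr : closedBall (0 : ℂ) r ⊆ ball 0 1 :=
    closedBall_subset_ball (by linarith)
  obtain ⟨z, hz, hz0⟩ := exists_zero_of_frontier (f := fun z => f z - w) (m := μ ^ 2 / (16 * A) - ‖w‖) hrpos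
    ((hd.mono hsubr).sub_const w)
    (by
      simp only [h0, zero_sub, norm_neg]
      have : μ ^ 2 / (32 * A) * 2 = μ ^ 2 / (16 * A) := by field_simp; ring
      linarith)
    (by
      intro z hz
      have h9 := hlow z hz
      have h10 : ‖f z‖ - ‖w‖ ≤ ‖f z - w‖ := norm_sub_norm_le _ _
      have : μ ^ 2 / (32 * A) * 2 = μ ^ 2 / (16 * A) := by field_simp; ring
      linarith)
  exact ⟨z, (ball_subset_ball (by linarith)) hz, sub_eq_zero.1 hz0⟩

/-- Mean value inequality for complex derivatives on a convex set. -/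
lemma norm_sub_le_of_deriv_bound {f : ℂ → ℂ} {s : Set ℂ} {M : ℝ} (hconv : Convex ℝ s)
    (hd : ∀ x ∈ s, DifferentiableAt ℂ f x) (hM : ∀ x ∈ s, ‖deriv f x‖ ≤ M)
    {x y : ℂ} (hx : x ∈ s) (hy : y ∈ s) : ‖f y - f x‖ ≤ M * ‖y - x‖ := by
  refine hconv.norm_image_sub_le_of_norm_hasFDerivWithin_le
    (f' := fun x => ContinuousLinearMap.smulRight (1 : ℂ →L[ℂ] ℂ) (deriv f x))
    (fun x hx => ((hd x hx).hasDerivAt.hasFDerivAt).hasFDerivWithinAt) (fun x hx => ?_) hx hy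
  rw [ContinuousLinearMap.norm_smulRight_apply, ContinuousLinearMap.one_def,
    ContinuousLinearMap.norm_id, one_mul]
  exact hM x hx

/-- Bloch-type theorem: the image of a holomorphic function on a disc contains a disc whose
radius is a universal multiple of the derivative at the center, centered at a point `F a`
with `a` quantitatively close to the center. -/
lemma bloch {F : ℂ → ℂ} {z₀ : ℂ} {R : ℝ} (hR : 0 < R)
    (hd : DifferentiableOn ℂ F (ball z₀ (2 * R))) :
    ∃ a : ℂ, ‖a - z₀‖ ≤ R ∧ ∀ w : ℂ, ‖w - F a‖ < R * ‖deriv F z₀‖ / 128 →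
      ∃ u : ℂ, ‖u - a‖ < R ∧ F u = w := by
  rcases eq_or_ne (deriv F z₀) 0 with h0 | h0
  · refine ⟨z₀, by simp [hR.le], fun w hw => absurd hw (not_lt.2 ?_)⟩
    rw [h0, norm_zero, mul_zero, zero_div]
    exact norm_nonneg _
  set μ₀ := ‖deriv F z₀‖ with hμ₀
  have hμ₀pos : 0 < μ₀ := norm_pos_iff.2 h0
  have hsubRR : closedBall z₀ R ⊆ ball z₀ (2 * R) := closedBall_subset_ball (by linarith)
  have hcont : ContinuousOn (deriv F) (ball z₀ (2 * R)) :=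
    ((hd.analyticOnNhd isOpen_ball).deriv).continuousOn
  set φ : ℂ → ℝ := fun z => (R - ‖z - z₀‖) * ‖deriv F z‖ with hφ
  have hφcont : ContinuousOn φ (closedBall z₀ R) := by
    apply ContinuousOn.mul
    · exact (continuous_const.sub (continuous_id.sub continuous_const).norm).continuousOn
    · exact (hcont.mono hsubRR).norm
  obtain ⟨a, haR, hmax⟩ := (isCompact_closedBall z₀ R).exists_isMaxOn
    ⟨z₀, mem_closedBall_self hR.le⟩ hφcont
  set m := φ a with hm
  have hm0 : R * μ₀ ≤ m := by
    have := hmax (mem_closedBall_self hR.le)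
    simpa [hφ] using this
  have hmpos : 0 < m := lt_of_lt_of_le (by positivity) hm0
  have haz : ‖a - z₀‖ < R := by
    by_contra h
    push_neg at h
    have : m ≤ 0 := by
      rw [hm, hφ]
      have : R - ‖a - z₀‖ ≤ 0 := by linarith
      exact mul_nonpos_of_nonpos_of_nonneg this (norm_nonneg _)
    linarith
  set ρ := (R - ‖a - z₀‖) / 2 with hρ
  have hρpos : 0 < ρ := by rw [hρ]; linarith
  have hρR : ρ ≤ R / 2 := by
    rw [hρ]
    have := norm_nonneg (a - z₀)
    linarith
  have hball_sub : ∀ z ∈ ball a ρ, z ∈ closedBall z₀ R ∧ ρ ≤ R - ‖z - z₀‖ := by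
    intro z hz
    have h1 : ‖z - a‖ < ρ := by simpa [dist_eq_norm] using hz
    have h2 : ‖z - z₀‖ ≤ ‖z - a‖ + ‖a - z₀‖ := by
      simpa using norm_add_le (z - a) (a - z₀)
    constructor
    · rw [mem_closedBall, dist_eq_norm]
      rw [hρ] at h1
      linarith
    · rw [hρ] at h1 ⊢
      linarith
  have hderiv_bd : ∀ z ∈ ball a ρ, ‖deriv F z‖ ≤ m / ρ := by
    intro z hz
    obtain ⟨hz1, hz2⟩ := hball_sub z hz
    have hφz : φ z ≤ m := hmax hz1
    rw [hφ] at hφz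
    rw [le_div_iff₀ hρpos]
    calc ‖deriv F z‖ * ρ ≤ ‖deriv F z‖ * (R - ‖z - z₀‖) :=
          mul_le_mul_of_nonneg_left hz2 (norm_nonneg _)
      _ = (R - ‖z - z₀‖) * ‖deriv F z‖ := mul_comm _ _
      _ ≤ m := hφz
  have hamem : a ∈ ball z₀ (2 * R) := hsubRR haR
  have h'a : ‖deriv F a‖ * (2 * ρ) = m := by
    rw [hm, hφ, hρ]
    ring
  -- the rescaled function
  set g : ℂ → ℂ := fun ζ => F (a + (ρ : ℂ) * ζ) - F a with hg
  have haff : ∀ ζ : ℂ, ζ ∈ ball (0 : ℂ) 1 → a + (ρ : ℂ) * ζ ∈ ball a ρ := by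
    intro ζ hζ
    have : ‖ζ‖ < 1 := by simpa using hζ
    rw [mem_ball, dist_eq_norm]
    have : ‖a + (ρ : ℂ) * ζ - a‖ = ρ * ‖ζ‖ := by
      rw [add_sub_cancel_left, norm_mul, Complex.norm_real]
      rw [Real.norm_eq_abs, abs_of_pos hρpos]
    rw [this]
    nlinarith
  have hball_a_sub : ball a ρ ⊆ ball z₀ (2 * R) := by
    intro z hz
    obtain ⟨hz1, _⟩ := hball_sub z hz
    exact (closedBall_subset_ball (by linarith)) hz1
  have hgd : DifferentiableOn ℂ g (ball 0 1) := by
    intro ζ hζ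
    have hFd : DifferentiableAt ℂ F (a + (ρ : ℂ) * ζ) :=
      hd.differentiableAt (isOpen_ball.mem_nhds (hball_a_sub (haff ζ hζ)))
    have hadiff : DifferentiableAt ℂ (fun ζ : ℂ => a + (ρ : ℂ) * ζ) ζ :=
      (differentiableAt_id.const_mul _).const_add a
    exact ((hFd.comp ζ hadiff).sub_const (F a)).differentiableWithinAt
  have hg0 : g 0 = 0 := by simp [hg]
  have hgb : ∀ ζ ∈ ball (0 : ℂ) 1, ‖g ζ‖ ≤ m := by
    intro ζ hζ
    have h1 := norm_sub_le_of_deriv_bound (convex_ball a ρ)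
      (fun x hx => hd.differentiableAt (isOpen_ball.mem_nhds (hball_a_sub hx)))
      hderiv_bd (mem_ball_self hρpos) (haff ζ hζ)
    have h2 : ‖a + (ρ : ℂ) * ζ - a‖ = ρ * ‖ζ‖ := by
      rw [add_sub_cancel_left, norm_mul, Complex.norm_real, Real.norm_eq_abs, abs_of_pos hρpos]
    rw [hg]
    simp only []
    calc ‖F (a + (ρ : ℂ) * ζ) - F a‖ ≤ m / ρ * ‖a + (ρ : ℂ) * ζ - a‖ := h1
      _ = m / ρ * (ρ * ‖ζ‖) := by rw [h2]
      _ = m * ‖ζ‖ := by field_simp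
      _ ≤ m := by
          have : ‖ζ‖ < 1 := by simpa using hζ
          nlinarith
  have hgderiv : HasDerivAt g (deriv F a * (ρ : ℂ)) 0 := by
    have h1 : HasDerivAt (fun ζ : ℂ => a + (ρ : ℂ) * ζ) (ρ : ℂ) 0 := by
      simpa using ((hasDerivAt_id (0 : ℂ)).const_mul (ρ : ℂ)).const_add a
    have h2 : HasDerivAt F (deriv F a) (a + (ρ : ℂ) * 0) := by
      rw [mul_zero, add_zero]
      exact (hd.differentiableAt (isOpen_ball.mem_nhds hamem)).hasDerivAt
    exact (h2.comp 0 h1).sub_const (F a)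
  have hgderiv' : ‖deriv g 0‖ = m / 2 := by
    rw [hgderiv.deriv, norm_mul, Complex.norm_real, Real.norm_eq_abs, abs_of_pos hρpos]
    rw [← h'a]
    ring
  -- apply Landau
  refine ⟨a, haz.le, fun w hw => ?_⟩
  have hwm : ‖w - F a‖ < ‖deriv g 0‖ ^ 2 / (32 * m) := by
    rw [hgderiv']
    have hq : (m / 2) ^ 2 / (32 * m) = m / 128 := by
      field_simp
      ring
    rw [hq]
    calc ‖w - F a‖ < R * μ₀ / 128 := hw
      _ ≤ m / 128 := by linarith
  obtain ⟨ζ, hζ, hgζ⟩ := landau hgd hg0 hgb (w - F a) hwm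
  refine ⟨a + (ρ : ℂ) * ζ, ?_, ?_⟩
  · have : ‖a + (ρ : ℂ) * ζ - a‖ = ρ * ‖ζ‖ := by
      rw [add_sub_cancel_left, norm_mul, Complex.norm_real, Real.norm_eq_abs, abs_of_pos hρpos]
    rw [this]
    have hζ1 : ‖ζ‖ < 1 := by simpa using hζ
    nlinarith
  · have h := hgζ
    rw [hg] at h
    simp only [] at h
    exact sub_left_inj.1 h

lemma im_ge_of_close {w z : ℂ} {d : ℝ} (h : ‖w - z‖ ≤ d) : z.im - d ≤ w.im := by
  have him : |(w - z).im| ≤ ‖w - z‖ := by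
    simpa using Complex.abs_im_le_norm (w - z)
  have h2 : (w - z).im = w.im - z.im := by simp [Complex.sub_im]
  rw [h2] at him
  have := abs_le.1 him
  linarith [this.1]

/-- Universal derivative bound for univalent maps commuting with translation by 1. -/
lemma univ_deriv_bound {F : ℂ → ℂ}
    (hdF : DifferentiableOn ℂ F {z : ℂ | 0 < z.im})
    (hinj : Set.InjOn F {z : ℂ | 0 < z.im})
    (hper : ∀ z : ℂ, 0 < z.im → F (z + 1) = F z + 1) :
    ∀ z : ℂ, 1/2 < z.im → ‖deriv F z‖ ≤ 256 := by
  intro z hz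
  by_contra hgt
  push_neg at hgt
  have hsub : ball z (2 * (1/4)) ⊆ {w : ℂ | 0 < w.im} := by
    intro w hw
    have h1 : ‖w - z‖ ≤ 1/2 := by
      have : ‖w - z‖ < 2 * (1/4) := by simpa [dist_eq_norm] using hw
      linarith
    have := im_ge_of_close h1
    simp only [mem_setOf_eq]
    linarith
  obtain ⟨a, haz, hsur⟩ := bloch (R := 1/4) (by norm_num) (hdF.mono hsub)
  have hrad : (1:ℝ)/2 < 1/4 * ‖deriv F z‖ / 128 := by linarith
  have hmem : ∀ u : ℂ, ‖u - a‖ < 1/4 → 0 < u.im := by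
    intro u hu
    have h2 : ‖u - z‖ ≤ 1/2 := by
      calc ‖u - z‖ ≤ ‖u - a‖ + ‖a - z‖ := by simpa using norm_add_le (u - a) (a - z)
        _ ≤ 1/2 := by linarith
    have := im_ge_of_close h2
    linarith
  obtain ⟨u, hu, hFu⟩ := hsur (F a - 1/2) (by
    rw [sub_sub_cancel_left, norm_neg]
    calc ‖(1/2 : ℂ)‖ = 1/2 := by norm_num
      _ < 1/4 * ‖deriv F z‖ / 128 := hrad)
  obtain ⟨v, hv, hFv⟩ := hsur (F a + 1/2) (by
    rw [add_sub_cancel_left]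
    calc ‖(1/2 : ℂ)‖ = 1/2 := by norm_num
      _ < 1/4 * ‖deriv F z‖ / 128 := hrad)
  have himu : 0 < u.im := hmem u hu
  have himv : 0 < v.im := hmem v hv
  have himu1 : 0 < (u + 1).im := by
    rw [Complex.add_im, Complex.one_im]
    linarith
  have hFeq : F v = F (u + 1) := by
    rw [hper u himu, hFu, hFv]
    ring
  have hveq : v = u + 1 := hinj himv himu1 hFeq
  have : (1 : ℝ) = ‖v - u‖ := by
    rw [hveq]
    simp
  have h3 : ‖v - u‖ ≤ ‖v - a‖ + ‖a - u‖ := by simpa using norm_add_le (v - a) (a - u)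
  have h4 : ‖a - u‖ = ‖u - a‖ := by rw [norm_sub_rev]
  linarith


lemma hopen0 : IsOpen {z : ℂ | 0 < z.im} := isOpen_lt continuous_const Complex.continuous_im

lemma hopenhalf : IsOpen {z : ℂ | 1/2 < z.im} := isOpen_lt continuous_const Complex.continuous_im

/-- Exponential decay of `F' - 1` with a universal constant. -/
lemma deriv_decay {α : ℝ} {F : ℂ → ℂ} (hF : SHat α 0 F) :
    ∀ z : ℂ, 1/2 < z.im →
      ‖deriv F z - 1‖ ≤ 257 * Real.exp Real.pi * Real.exp (-2 * Real.pi * z.im) := by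
  obtain ⟨hdF, hinj, hper, hlim⟩ := hF
  have hd256 := univ_deriv_bound hdF hinj hper
  have hderiv_per : ∀ z : ℂ, 0 < z.im → deriv F (z + 1) = deriv F z := by
    intro z hz
    have hev : (fun w => F (w + 1)) =ᶠ[𝓝 z] (fun w => F w + 1) := by
      filter_upwards [hopen0.mem_nhds hz] with w hw using hper w hw
    calc deriv F (z + 1) = deriv (fun w => F (w + 1)) z := (deriv_comp_add_const F 1 z).symm
      _ = deriv (fun w => F w + 1) z := hev.deriv_eq
      _ = deriv F z := by rw [deriv_add_const]
  set H : ℂ → ℂ := fun z => if 1/2 < z.im then deriv F z - 1 else 0 with hH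
  have hHval : ∀ z : ℂ, 1/2 < z.im → H z = deriv F z - 1 := by
    intro z hz
    rw [hH]
    exact if_pos hz
  have hHper : Function.Periodic H 1 := by
    intro z
    have him : (z + 1).im = z.im := by simp
    by_cases h : 1/2 < z.im
    · rw [hHval z h, hHval (z + 1) (by rw [him]; exact h)]
      rw [hderiv_per z (by linarith)]
    · rw [hH]
      simp only []
      rw [if_neg (by rw [him]; exact h), if_neg h]
  have hHdiffAt : ∀ w : ℂ, 1/2 < w.im → DifferentiableAt ℂ H w := by
    intro w hw
    have h1 : DifferentiableAt ℂ (fun z => deriv F z - 1) w :=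
      (((hdF.analyticOnNhd hopen0).deriv w (by simp only [mem_setOf_eq]; linarith)
        ).differentiableAt).sub_const 1
    apply h1.congr_of_eventuallyEq
    filter_upwards [hopenhalf.mem_nhds hw] with x hx
    exact hHval x hx
  have hHdiff : ∀ᶠ z in (Filter.comap Complex.im Filter.atTop), DifferentiableAt ℂ H z := by
    filter_upwards [Filter.preimage_mem_comap (Ici_mem_atTop (1 : ℝ))] with z hz
    have : (1 : ℝ) ≤ z.im := hz
    exact hHdiffAt z (by linarith)
  have hHbdd : ∀ z : ℂ, ‖H z‖ ≤ 257 := by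
    intro z
    rw [hH]
    simp only []
    split_ifs with h
    · have h1 : ‖deriv F z - 1‖ ≤ ‖deriv F z‖ + ‖(1 : ℂ)‖ := norm_sub_le _ _
      have h2 := hd256 z h
      simp only [norm_one] at h1
      linarith
    · simp
  have hHzero : Filter.ZeroAtFilter (Filter.comap Complex.im Filter.atTop) H := by
    rw [Filter.ZeroAtFilter, NormedAddCommGroup.tendsto_nhds_zero]
    intro ε hε
    obtain ⟨Y, hY0, hYb⟩ := hlim (ε / 4) (by positivity)
    filter_upwards [Filter.preimage_mem_comap (Ici_mem_atTop (Y + 1))] with z hz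
    have hz' : Y + 1 ≤ z.im := hz
    have hzim : 1/2 < z.im := by linarith
    rw [hHval z hzim]
    set Gf : ℂ → ℂ := fun w => F w - (w + (α : ℂ)) with hGf
    have hsubset : closedBall z 1 ⊆ {w : ℂ | 0 < w.im} := by
      intro w hw
      have h1 : ‖w - z‖ ≤ 1 := by simpa [dist_eq_norm] using hw
      have := im_ge_of_close h1
      simp only [mem_setOf_eq]
      linarith
    have hGd : DifferentiableOn ℂ Gf (closedBall z 1) :=
      (hdF.mono hsubset).sub (differentiable_id.add_const _).differentiableOn
    have hG'le : ‖deriv Gf z‖ ≤ (ε / 4) / 1 := by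
      refine Complex.norm_deriv_le_of_forall_mem_sphere_norm_le one_pos
        ⟨hGd.mono ball_subset_closedBall, ?_⟩ ?_
      · rw [closure_ball z one_ne_zero]
        exact hGd.continuousOn
      · intro w hw
        have h1 : ‖w - z‖ ≤ 1 := by
          rw [mem_sphere, dist_eq_norm] at hw
          rw [hw]
        have := im_ge_of_close h1
        exact hYb w (by linarith)
    have hder : deriv Gf z = deriv F z - 1 := by
      have h1 : HasDerivAt Gf (deriv F z - 1) z := by
        have h2 : HasDerivAt F (deriv F z) z :=
          (hdF.differentiableAt (hopen0.mem_nhds (by simp only [mem_setOf_eq]; linarith))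
            ).hasDerivAt
        have h3 : HasDerivAt (fun w : ℂ => w + (α : ℂ)) 1 z := (hasDerivAt_id z).add_const _
        exact h2.sub h3
      exact h1.deriv
    rw [← hder]
    calc ‖deriv Gf z‖ ≤ ε / 4 / 1 := hG'le
      _ < ε := by linarith
  -- cusp function
  set g₁ := Function.Periodic.cuspFunction 1 H with hg₁
  have hg₁0 : g₁ 0 = 0 := Function.Periodic.cuspFunction_zero_of_zero_at_inf one_pos hHzero
  have hq_inv_im : ∀ q : ℂ, q ≠ 0 → ‖q‖ < Real.exp (-Real.pi) →
      1/2 < (Function.Periodic.invQParam 1 q).im := by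
    intro q hq0 hq
    rw [Function.Periodic.im_invQParam]
    have hlog : Real.log (‖q‖) < -Real.pi :=
      (Real.log_lt_iff_lt_exp (norm_pos_iff.2 hq0)).2 hq
    have h2π : 0 < 2 * Real.pi := by positivity
    have he : -1 / (2 * Real.pi) * Real.log (‖q‖)
        = (-Real.log (‖q‖)) / (2 * Real.pi) := by ring
    rw [he, lt_div_iff₀ h2π]
    linarith
  have hg₁diffOn : DifferentiableOn ℂ g₁ (ball 0 (Real.exp (-Real.pi))) := by
    intro q hq
    rcases eq_or_ne q 0 with rfl | hq0
    · exact (Function.Periodic.differentiableAt_cuspFunction_zero one_pos hHper hHdiff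
        hHzero.boundedAtFilter).differentiableWithinAt
    · have habs : ‖q‖ < Real.exp (-Real.pi) := by
        simpa [mem_ball, Complex.dist_eq] using hq
      have h1 := hHdiffAt _ (hq_inv_im q hq0 habs)
      have h2 := Function.Periodic.differentiableAt_cuspFunction one_ne_zero hHper h1
      rw [Function.Periodic.qParam_right_inv one_ne_zero hq0] at h2
      exact h2.differentiableWithinAt
  have hg₁bdd : ∀ q ∈ ball (0 : ℂ) (Real.exp (-Real.pi)), ‖g₁ q‖ ≤ 257 := by
    intro q hq
    rcases eq_or_ne q 0 with rfl | hq0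
    · rw [hg₁0]; norm_num
    · rw [hg₁, Function.Periodic.cuspFunction_eq_of_nonzero _ _ hq0]
      exact hHbdd _
  -- quantitative Schwarz lemma
  have hg₁M : ∀ M : ℝ, 257 < M → ∀ q ∈ ball (0 : ℂ) (Real.exp (-Real.pi)),
      ‖g₁ q‖ ≤ M / Real.exp (-Real.pi) * ‖q‖ := by
    intro M hM q hq
    have hmaps : MapsTo g₁ (ball 0 (Real.exp (-Real.pi))) (ball (g₁ 0) M) := by
      intro x hx
      rw [hg₁0, mem_ball, dist_zero_right]
      exact lt_of_le_of_lt (hg₁bdd x hx) hM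
    have hds := Complex.norm_dslope_le_div_of_mapsTo_ball hg₁diffOn (hmaps.mono_right ball_subset_closedBall) hq
    have heq : g₁ q = q • dslope g₁ 0 q := by
      have h1 := sub_smul_dslope g₁ 0 q
      simp only [sub_zero, hg₁0] at h1
      rw [← h1]
    calc ‖g₁ q‖ = ‖q‖ * ‖dslope g₁ 0 q‖ := by rw [heq, norm_smul]
      _ ≤ ‖q‖ * (M / Real.exp (-Real.pi)) :=
          mul_le_mul_of_nonneg_left hds (norm_nonneg _)
      _ = M / Real.exp (-Real.pi) * ‖q‖ := mul_comm _ _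
  have hg₁lin : ∀ q ∈ ball (0 : ℂ) (Real.exp (-Real.pi)),
      ‖g₁ q‖ ≤ 257 * Real.exp Real.pi * ‖q‖ := by
    intro q hq
    have h257 : 257 / Real.exp (-Real.pi) = 257 * Real.exp Real.pi := by
      rw [Real.exp_neg]
      field_simp
    rcases eq_or_ne q 0 with rfl | hq0
    · simp [hg₁0]
    · have hq0' : 0 < ‖q‖ := norm_pos_iff.2 hq0
      by_contra hcon
      push_neg at hcon
      rw [← h257] at hcon
      have hepos : 0 < Real.exp (-Real.pi) := Real.exp_pos _
      set t := ‖g₁ q‖ * Real.exp (-Real.pi) / ‖q‖ with ht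
      have h257t : 257 < t := by
        rw [ht, lt_div_iff₀ hq0']
        calc 257 * ‖q‖ = 257 / Real.exp (-Real.pi) * ‖q‖ * Real.exp (-Real.pi) := by
              field_simp
          _ < ‖g₁ q‖ * Real.exp (-Real.pi) := by
              exact mul_lt_mul_of_pos_right hcon hepos
      set M := (257 + t) / 2 with hMdef
      have hM1 : 257 < M := by rw [hMdef]; linarith
      have hM2 : M < t := by rw [hMdef]; linarith
      have := hg₁M M hM1 q hq
      have hcontr : M / Real.exp (-Real.pi) * ‖q‖ < ‖g₁ q‖ := by
        rw [div_mul_eq_mul_div, div_lt_iff₀ hepos]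
        rw [ht] at hM2
        have h5 := (lt_div_iff₀ hq0').1 hM2
        linarith
      linarith
  -- conclude
  intro z hz
  have hq_mem : Function.Periodic.qParam 1 z ∈ ball (0 : ℂ) (Real.exp (-Real.pi)) := by
    rw [mem_ball, dist_zero_right, Function.Periodic.norm_qParam,
      Real.exp_lt_exp]
    have := Real.pi_pos
    rw [div_one]
    nlinarith
  have h1 : deriv F z - 1 = H z := (hHval z hz).symm
  have h2 : H z = g₁ (Function.Periodic.qParam 1 z) :=
    (Function.Periodic.eq_cuspFunction one_ne_zero hHper z).symm
  rw [h1, h2]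
  have h3 := hg₁lin _ hq_mem
  have h4 : ‖Function.Periodic.qParam 1 z‖ = Real.exp (-2 * Real.pi * z.im) := by
    rw [Function.Periodic.norm_qParam, div_one]
  rw [h4] at h3
  exact h3

/-- The universal constant for the decay estimates. -/
def Kc : ℝ := 514 * Real.exp (2 * Real.pi)

lemma Kc_pos : 0 < Kc := by
  rw [Kc]
  positivity

/-- Exponential decay of `F - (id + α)` and `F' - 1` with the universal constant `Kc`. -/
lemma key_est {α : ℝ} {F : ℂ → ℂ} (hF : SHat α 0 F) :
    ∀ z : ℂ, 1 ≤ z.im →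
      ‖F z - (z + (α : ℂ))‖ ≤ Kc * Real.exp (-2 * Real.pi * z.im) ∧
      ‖deriv F z - 1‖ ≤ Kc * Real.exp (-2 * Real.pi * z.im) := by
  have hdecay := deriv_decay hF
  obtain ⟨hdF, hinj, hper, hlim⟩ := hF
  set D := 257 * Real.exp Real.pi with hD
  have hDpos : 0 < D := by rw [hD]; positivity
  set Gf : ℂ → ℂ := fun w => F w - (w + (α : ℂ)) with hGf
  have hGdiffAt : ∀ w : ℂ, 0 < w.im → DifferentiableAt ℂ Gf w := by
    intro w hw
    exact (hdF.differentiableAt (hopen0.mem_nhds hw)).sub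
      ((differentiable_id.add_const _) w)
  have hGder : ∀ w : ℂ, 0 < w.im → deriv Gf w = deriv F w - 1 := by
    intro w hw
    have h2 : HasDerivAt F (deriv F w) w := (hdF.differentiableAt (hopen0.mem_nhds hw)).hasDerivAt
    have h3 : HasDerivAt (fun u : ℂ => u + (α : ℂ)) 1 w := (hasDerivAt_id w).add_const _
    exact (h2.sub h3).deriv
  intro z hz
  have hder_bd : ‖deriv F z - 1‖ ≤ Kc * Real.exp (-2 * Real.pi * z.im) := by
    have h1 := hdecay z (by linarith)
    have h2 : D ≤ Kc := by
      rw [hD, Kc]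
      have h3 : Real.exp Real.pi ≤ Real.exp (2 * Real.pi) := by
        rw [Real.exp_le_exp]
        linarith [Real.pi_pos]
      nlinarith [Real.exp_pos Real.pi]
    calc ‖deriv F z - 1‖ ≤ D * Real.exp (-2 * Real.pi * z.im) := h1
      _ ≤ Kc * Real.exp (-2 * Real.pi * z.im) := by
          exact mul_le_mul_of_nonneg_right h2 (Real.exp_pos _).le
  refine ⟨?_, hder_bd⟩
  -- telescoping estimate along the vertical ray
  have hstep : ∀ n : ℕ, ‖Gf (z + n * I) - Gf (z + (n + 1) * I)‖ ≤
      D * Real.exp Real.pi * Real.exp (-2 * Real.pi * z.im) * Real.exp (-2 * Real.pi) ^ n := by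
    intro n
    set s : Set ℂ := {w : ℂ | z.im + n - 1/2 < w.im} with hs
    have hn0 : (0 : ℝ) ≤ n := Nat.cast_nonneg n
    have hs_half : ∀ w ∈ s, 1/2 < w.im := by
      intro w hw
      simp only [hs, mem_setOf_eq] at hw
      linarith
    have hs_diff : ∀ w ∈ s, DifferentiableAt ℂ Gf w := by
      intro w hw
      exact hGdiffAt w (by linarith [hs_half w hw])
    have hs_bd : ∀ w ∈ s, ‖deriv Gf w‖ ≤
        D * Real.exp Real.pi * Real.exp (-2 * Real.pi * z.im) * Real.exp (-2 * Real.pi) ^ n := by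
      intro w hw
      have hw2 := hs_half w hw
      rw [hGder w (by linarith)]
      have h1 := hdecay w hw2
      have h2 : Real.exp (-2 * Real.pi * w.im) ≤
          Real.exp Real.pi * Real.exp (-2 * Real.pi * z.im) * Real.exp (-2 * Real.pi) ^ n := by
        rw [← Real.exp_nat_mul, ← Real.exp_add, ← Real.exp_add, Real.exp_le_exp]
        simp only [hs, mem_setOf_eq] at hw
        nlinarith [Real.pi_pos]
      calc ‖deriv F w - 1‖ ≤ D * Real.exp (-2 * Real.pi * w.im) := h1
        _ ≤ D * (Real.exp Real.pi * Real.exp (-2 * Real.pi * z.im)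
            * Real.exp (-2 * Real.pi) ^ n) := mul_le_mul_of_nonneg_left h2 hDpos.le
        _ = D * Real.exp Real.pi * Real.exp (-2 * Real.pi * z.im)
            * Real.exp (-2 * Real.pi) ^ n := by ring
    have hx : z + (n : ℂ) * I ∈ s := by
      simp only [hs, mem_setOf_eq, Complex.add_im, Complex.mul_im, Complex.natCast_re,
        Complex.I_im, Complex.natCast_im, Complex.I_re, mul_zero, mul_one, zero_mul]
      linarith
    have hy : z + ((n : ℂ) + 1) * I ∈ s := by
      simp only [hs, mem_setOf_eq, Complex.add_im, Complex.mul_im, Complex.add_re,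
        Complex.natCast_re, Complex.one_re, Complex.I_im, Complex.add_im, Complex.natCast_im,
        Complex.one_im, Complex.I_re, mul_zero, mul_one, zero_mul]
      linarith
    have h3 := norm_sub_le_of_deriv_bound (convex_halfSpace_im_gt _) hs_diff hs_bd hy hx
    have h4 : ‖(z + (n : ℂ) * I) - (z + ((n : ℂ) + 1) * I)‖ = 1 := by
      have : (z + (n : ℂ) * I) - (z + ((n : ℂ) + 1) * I) = -I := by ring
      rw [this, norm_neg, Complex.norm_I]
    calc ‖Gf (z + (n : ℂ) * I) - Gf (z + ((n : ℂ) + 1) * I)‖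
        ≤ D * Real.exp Real.pi * Real.exp (-2 * Real.pi * z.im) * Real.exp (-2 * Real.pi) ^ n
          * ‖(z + (n : ℂ) * I) - (z + ((n : ℂ) + 1) * I)‖ := h3
      _ = D * Real.exp Real.pi * Real.exp (-2 * Real.pi * z.im)
          * Real.exp (-2 * Real.pi) ^ n := by rw [h4, mul_one]
  have htel : ∀ N : ℕ, ‖Gf z - Gf (z + N * I)‖ ≤
      2 * D * Real.exp Real.pi * Real.exp (-2 * Real.pi * z.im) := by
    intro N
    have hsum : ‖Gf z - Gf (z + N * I)‖ ≤
        D * Real.exp Real.pi * Real.exp (-2 * Real.pi * z.im)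
          * ∑ n ∈ Finset.range N, Real.exp (-2 * Real.pi) ^ n := by
      induction N with
      | zero => simp
      | succ N ih =>
        have h5 : ‖Gf z - Gf (z + (N + 1 : ℕ) * I)‖ ≤ ‖Gf z - Gf (z + N * I)‖
            + ‖Gf (z + N * I) - Gf (z + ((N : ℂ) + 1) * I)‖ := by
          have : Gf z - Gf (z + (N + 1 : ℕ) * I)
              = (Gf z - Gf (z + N * I)) + (Gf (z + N * I) - Gf (z + ((N : ℂ) + 1) * I)) := by
            push_cast
            ring_nf
          rw [this]
          exact norm_add_le _ _
        rw [Finset.sum_range_succ, mul_add]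
        have h6 := hstep N
        linarith
    have hgeom : ∑ n ∈ Finset.range N, Real.exp (-2 * Real.pi) ^ n ≤ 2 := by
      have hr2 : Real.exp (-2 * Real.pi) ≤ 1/2 := by
        have h7 : Real.exp (-2 * Real.pi) ≤ Real.exp (-1) := by
          rw [Real.exp_le_exp]
          linarith [Real.pi_gt_three]
        have h8 : Real.exp (-1 : ℝ) ≤ 1/2 := by
          rw [Real.exp_neg]
          rw [inv_le_comm₀ (Real.exp_pos 1) (by norm_num)]
          have h9 := Real.add_one_le_exp 1
          norm_num
          linarith
        linarith
      calc ∑ n ∈ Finset.range N, Real.exp (-2 * Real.pi) ^ n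
          ≤ ∑ n ∈ Finset.range N, (1/2 : ℝ) ^ n := by
            apply Finset.sum_le_sum
            intro i _
            exact pow_le_pow_left₀ (Real.exp_pos _).le hr2 i
        _ ≤ 2 := sum_geometric_two_le N
    have hpos : 0 ≤ D * Real.exp Real.pi * Real.exp (-2 * Real.pi * z.im) := by positivity
    calc ‖Gf z - Gf (z + N * I)‖ ≤ D * Real.exp Real.pi * Real.exp (-2 * Real.pi * z.im)
          * ∑ n ∈ Finset.range N, Real.exp (-2 * Real.pi) ^ n := hsum
      _ ≤ D * Real.exp Real.pi * Real.exp (-2 * Real.pi * z.im) * 2 :=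
          mul_le_mul_of_nonneg_left hgeom hpos
      _ = 2 * D * Real.exp Real.pi * Real.exp (-2 * Real.pi * z.im) := by ring
  -- take the limit
  have hbound : ‖Gf z‖ ≤ 2 * D * Real.exp Real.pi * Real.exp (-2 * Real.pi * z.im) := by
    apply le_of_forall_pos_le_add
    intro ε hε
    obtain ⟨Y, hY0, hYb⟩ := hlim ε hε
    obtain ⟨N, hN⟩ := exists_nat_ge (Y - z.im)
    have him : (z + (N : ℂ) * I).im = z.im + N := by
      simp [Complex.add_im, Complex.mul_im]
    have h9 : ‖Gf (z + (N : ℂ) * I)‖ ≤ ε := by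
      apply hYb
      rw [him]
      linarith
    calc ‖Gf z‖ = ‖(Gf z - Gf (z + (N : ℂ) * I)) + Gf (z + (N : ℂ) * I)‖ := by ring_nf
      _ ≤ ‖Gf z - Gf (z + (N : ℂ) * I)‖ + ‖Gf (z + (N : ℂ) * I)‖ := norm_add_le _ _
      _ ≤ 2 * D * Real.exp Real.pi * Real.exp (-2 * Real.pi * z.im) + ε := by
          have := htel N
          linarith
  have hKc : 2 * D * Real.exp Real.pi = Kc := by
    rw [hD, Kc, show (2 : ℝ) * Real.pi = Real.pi + Real.pi by ring, Real.exp_add]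
    ring
  rw [← hKc]
  exact hbound

lemma Kc_le : Kc ≤ 600000 := by
  rw [Kc]
  have h1 : Real.exp (2 * Real.pi) ≤ Real.exp 7 := by
    rw [Real.exp_le_exp]
    nlinarith [Real.pi_lt_d2]
  have h2 : Real.exp (7 : ℝ) = Real.exp 1 ^ (7 : ℕ) := by
    rw [show (7 : ℝ) = ((7 : ℕ) : ℝ) * 1 by norm_num, Real.exp_nat_mul]
  have h3 : Real.exp 1 ≤ 2.7182818286 := Real.exp_one_lt_d9.le
  have h4 : Real.exp 1 ^ (7 : ℕ) ≤ (2.7182818286 : ℝ) ^ (7 : ℕ) :=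
    pow_le_pow_left₀ (Real.exp_pos 1).le h3 7
  have h5 : (2.7182818286 : ℝ) ^ (7 : ℕ) ≤ 1097 := by norm_num
  nlinarith
lemma exp_pi_le : Real.exp Real.pi ≤ 55 := by
  have h1 : Real.exp Real.pi ≤ Real.exp 4 := by
    rw [Real.exp_le_exp]
    exact Real.pi_le_four
  have h2 : Real.exp (4 : ℝ) = Real.exp 1 ^ (4 : ℕ) := by
    rw [show (4 : ℝ) = ((4 : ℕ) : ℝ) * 1 by norm_num, Real.exp_nat_mul]
  have h3 : Real.exp 1 ≤ 2.7182818286 := Real.exp_one_lt_d9.le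
  have h4 : Real.exp 1 ^ (4 : ℕ) ≤ (2.7182818286 : ℝ) ^ (4 : ℕ) :=
    pow_le_pow_left₀ (Real.exp_pos 1).le h3 4
  have h5 : (2.7182818286 : ℝ) ^ (4 : ℕ) ≤ 55 := by norm_num
  nlinarith

lemma KcEpi_le : Kc * Real.exp Real.pi ≤ 33000000 := by
  have h1 := Kc_le
  have h2 := exp_pi_le
  have h3 := Kc_pos
  have h4 := Real.exp_pos Real.pi
  nlinarith

lemma small_exp : ∀ t : ℝ, (10 ^ 6 : ℝ) ≤ t → Kc * Real.exp (-2 * Real.pi * t) ≤ 1 / 8 := by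
  intro t ht
  have hπ := Real.pi_gt_three
  have h1 : 2 * Real.pi * t + 1 ≤ Real.exp (2 * Real.pi * t) := Real.add_one_le_exp _
  have h2 : Real.exp (-2 * Real.pi * t) = (Real.exp (2 * Real.pi * t))⁻¹ := by
    rw [show -2 * Real.pi * t = -(2 * Real.pi * t) by ring, Real.exp_neg]
  have h6t : 0 < 6 * t := by linarith
  have hq : 0 < 2 * Real.pi * t + 1 := by nlinarith
  have h3 : (Real.exp (2 * Real.pi * t))⁻¹ ≤ (2 * Real.pi * t + 1)⁻¹ := inv_anti₀ hq h1
  have h4 : 6 * t ≤ 2 * Real.pi * t + 1 := by nlinarith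
  have h5 : (2 * Real.pi * t + 1)⁻¹ ≤ (6 * t)⁻¹ := inv_anti₀ h6t h4
  have h7 := Kc_le
  calc Kc * Real.exp (-2 * Real.pi * t) = Kc * (Real.exp (2 * Real.pi * t))⁻¹ := by rw [h2]
    _ ≤ 600000 * (6 * t)⁻¹ := by
        apply mul_le_mul h7 (h3.trans h5) (by positivity) (by norm_num)
    _ ≤ 1 / 8 := by
        rw [← div_eq_mul_inv, div_le_iff₀ h6t]
        linarith

end ShatAux

open ShatAux in
/-- There is a universal constant `C > 0` such that for any `F ∈ Ŝ_{α,0}`, the half-plane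
`H_C` is contained in `F(H_0)`, the inverse `F⁻¹` is univalent on `H_C`, and it satisfies
`|F⁻¹(z) - (z - α)| ≤ C e^{-2π Im z}` and `|(F⁻¹)'(z) - 1| ≤ C e^{-2π Im z}` for
`Im z ≥ C`. -/
theorem shat_inverse_estimates :
    ∃ C : ℝ, 0 < C ∧
      ∀ (α : ℝ) (F : ℂ → ℂ), SHat α 0 F →
        {z : ℂ | C < z.im} ⊆ F '' {z : ℂ | 0 < z.im} ∧
        ∃ Finv : ℂ → ℂ,
          (∀ z : ℂ, C ≤ z.im → 0 < (Finv z).im ∧ F (Finv z) = z) ∧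
          Set.InjOn Finv {z : ℂ | C < z.im} ∧
          (∀ z : ℂ, C ≤ z.im → DifferentiableAt ℂ Finv z) ∧
          (∀ z : ℂ, C ≤ z.im →
            ‖Finv z - (z - (α : ℂ))‖ ≤ C * Real.exp (-2 * Real.pi * z.im) ∧
            ‖deriv Finv z - 1‖ ≤ C * Real.exp (-2 * Real.pi * z.im)) := by
  refine ⟨10 ^ 9, by norm_num, ?_⟩
  intro α F hF
  have hest := key_est hF
  obtain ⟨hdF, hinj, hper, hlim⟩ := hF
  have hKcpos := Kc_pos
  have hEpos : (0 : ℝ) < Real.exp Real.pi := Real.exp_pos _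
  -- existence of preimages
  have hpre : ∀ w : ℂ, (10 ^ 9 : ℝ) - 1 ≤ w.im →
      ∃ z : ℂ, ‖z - (w - (α : ℂ))‖ ≤ 1 / 2 ∧ F z = w := by
    intro w hw
    have himc : (w - (α : ℂ)).im = w.im := by simp
    have hsubset : closedBall (w - (α : ℂ)) (1 / 2) ⊆ {u : ℂ | 0 < u.im} := by
      intro u hu
      have h1 : ‖u - (w - (α : ℂ))‖ ≤ 1 / 2 := by simpa [dist_eq_norm] using hu
      have := im_ge_of_close h1
      simp only [mem_setOf_eq]
      rw [himc] at this
      linarith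
    have hcenter : ‖F (w - (α : ℂ)) - w‖ < 1 / 4 := by
      have h1 := (hest (w - (α : ℂ)) (by rw [himc]; linarith)).1
      rw [sub_add_cancel] at h1
      have h2 : Kc * Real.exp (-2 * Real.pi * (w - (α : ℂ)).im) ≤ 1 / 8 := by
        apply small_exp
        rw [himc]
        linarith
      calc ‖F (w - (α : ℂ)) - w‖ ≤ Kc * Real.exp (-2 * Real.pi * (w - (α : ℂ)).im) := h1
        _ ≤ 1 / 8 := h2
        _ < 1 / 4 := by norm_num
    obtain ⟨z, hz, hz0⟩ := exists_zero_of_frontier (f := fun z => F z - w)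
      (m := 1 / 4) (by norm_num : (0:ℝ) < 1/2)
      ((hdF.mono hsubset).sub_const w) hcenter
      (by
        intro u hu
        have h1 : ‖u - (w - (α : ℂ))‖ = 1 / 2 := by
          rw [mem_sphere, dist_eq_norm] at hu
          exact hu
        have h2 : 0 < u.im ∧ (10 ^ 6 : ℝ) ≤ u.im := by
          have := im_ge_of_close h1.le
          rw [himc] at this
          constructor <;> linarith
        have h3 := (hest u (by linarith [h2.2])).1
        have h4 : Kc * Real.exp (-2 * Real.pi * u.im) ≤ 1 / 8 := small_exp _ h2.2
        have h5 : F u - w = (F u - (u + (α : ℂ))) + (u - (w - (α : ℂ))) := by ring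
        have h6 : ‖u - (w - (α : ℂ))‖ ≤ ‖F u - w‖ + ‖F u - (u + (α : ℂ))‖ := by
          calc ‖u - (w - (α : ℂ))‖ = ‖(F u - w) - (F u - (u + (α : ℂ)))‖ := by ring_nf
            _ ≤ ‖F u - w‖ + ‖F u - (u + (α : ℂ))‖ := norm_sub_le _ _
        rw [h1] at h6
        linarith)
    refine ⟨z, ?_, sub_eq_zero.1 hz0⟩
    have : ‖z - (w - (α : ℂ))‖ < 1 / 2 := by simpa [dist_eq_norm] using hz
    linarith
  classical
  set Finv : ℂ → ℂ := fun w =>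
    if h : (10 ^ 9 : ℝ) - 1 ≤ w.im then Classical.choose (hpre w h) else 0 with hFinvdef
  have hFinv_spec : ∀ w : ℂ, (10 ^ 9 : ℝ) - 1 ≤ w.im →
      ‖Finv w - (w - (α : ℂ))‖ ≤ 1 / 2 ∧ F (Finv w) = w := by
    intro w hw
    rw [hFinvdef]
    simp only [dif_pos hw]
    exact Classical.choose_spec (hpre w hw)
  have hFinv_im : ∀ w : ℂ, (10 ^ 9 : ℝ) - 1 ≤ w.im → w.im - 1 / 2 ≤ (Finv w).im := by
    intro w hw
    have h1 := (hFinv_spec w hw).1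
    have h2 := im_ge_of_close h1
    have : (w - (α : ℂ)).im = w.im := by simp
    rw [this] at h2
    exact h2
  have hFinv_pos : ∀ w : ℂ, (10 ^ 9 : ℝ) - 1 ≤ w.im → 0 < (Finv w).im := by
    intro w hw
    have := hFinv_im w hw
    linarith
  have hkey : ∀ z : ℂ, (10 ^ 9 : ℝ) ≤ z.im → DifferentiableAt ℂ Finv z ∧
      ‖Finv z - (z - (α : ℂ))‖ ≤ 10 ^ 9 * Real.exp (-2 * Real.pi * z.im) ∧
      ‖deriv Finv z - 1‖ ≤ 10 ^ 9 * Real.exp (-2 * Real.pi * z.im) := by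
    intro z hz
    set z₀ := Finv z with hz₀def
    have hspec := hFinv_spec z (by linarith)
    have hFz₀ : F z₀ = z := hspec.2
    have him1 : z.im - 1 / 2 ≤ z₀.im := hFinv_im z (by linarith)
    have him0 : 0 < z₀.im := by linarith
    have him2 : 1 ≤ z₀.im := by linarith
    have hE := hest z₀ him2
    have hsm : Kc * Real.exp (-2 * Real.pi * z₀.im) ≤ 1 / 8 := small_exp _ (by linarith)
    have hshift : Real.exp (-2 * Real.pi * z₀.im) ≤
        Real.exp Real.pi * Real.exp (-2 * Real.pi * z.im) := by
      rw [← Real.exp_add, Real.exp_le_exp]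
      nlinarith [Real.pi_pos]
    set d := deriv F z₀ with hddef
    have hd8 : ‖d - 1‖ ≤ 1 / 8 := le_trans hE.2 hsm
    have hdshift : ‖d - 1‖ ≤ Kc * Real.exp Real.pi * Real.exp (-2 * Real.pi * z.im) := by
      calc ‖d - 1‖ ≤ Kc * Real.exp (-2 * Real.pi * z₀.im) := hE.2
        _ ≤ Kc * (Real.exp Real.pi * Real.exp (-2 * Real.pi * z.im)) :=
            mul_le_mul_of_nonneg_left hshift hKcpos.le
        _ = Kc * Real.exp Real.pi * Real.exp (-2 * Real.pi * z.im) := by ring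
    have hd7 : (7 : ℝ) / 8 ≤ ‖d‖ := by
      have h1 := abs_norm_sub_norm_le d 1
      have h2 := abs_le.1 h1
      simp only [norm_one] at h2
      linarith [h2.1]
    have hdne : d ≠ 0 := by
      intro h
      rw [h, norm_zero] at hd7
      norm_num at hd7
    obtain ⟨p, hp⟩ := hdF.analyticAt (hopen0.mem_nhds him0)
    have hstrict : HasStrictDerivAt F d z₀ := by
      have h1 := hp.hasStrictDerivAt
      rwa [← hp.deriv] at h1
    set L := hstrict.localInverse F d z₀ hdne with hLdef
    have hLstrict : HasStrictDerivAt L d⁻¹ z := by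
      have h1 := hstrict.to_localInverse (hf' := hdne)
      rwa [hFz₀] at h1
    have hLdiff : DifferentiableAt ℂ L z := hLstrict.hasDerivAt.differentiableAt
    have hLz : L z = z₀ := by
      have h1 := (hstrict.hasStrictFDerivAt_equiv hdne).localInverse_apply_image
      rwa [hFz₀] at h1
    have hright : ∀ᶠ w in 𝓝 z, F (L w) = w := by
      have h1 := (hstrict.hasStrictFDerivAt_equiv hdne).eventually_right_inverse
      rwa [hFz₀] at h1
    have hLpos : ∀ᶠ w in 𝓝 z, 0 < (L w).im := by
      have hLcont : ContinuousAt L z := hLdiff.continuousAt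
      have h1 : {u : ℂ | 0 < u.im} ∈ 𝓝 (L z) := by
        rw [hLz]
        exact hopen0.mem_nhds him0
      exact hLcont.eventually_mem h1
    have hCnear : ∀ᶠ w in 𝓝 z, (10 ^ 9 : ℝ) - 1 ≤ w.im := by
      have hop : IsOpen {u : ℂ | (10 ^ 9 : ℝ) - 1 < u.im} :=
        isOpen_lt continuous_const Complex.continuous_im
      filter_upwards [hop.mem_nhds (show (10 ^ 9 : ℝ) - 1 < z.im by linarith)] with w hw
      exact le_of_lt hw
    have heqv : Finv =ᶠ[𝓝 z] L := by
      filter_upwards [hright, hLpos, hCnear] with w h1 h2 h3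
      have h4 := (hFinv_spec w h3).2
      have h5 := hFinv_pos w h3
      exact hinj h5 h2 (by rw [h4, h1])
    have hdiffAt : DifferentiableAt ℂ Finv z := (heqv.differentiableAt_iff).2 hLdiff
    have hderiv : deriv Finv z = d⁻¹ := by
      rw [heqv.deriv_eq]
      exact hLstrict.hasDerivAt.deriv
    refine ⟨hdiffAt, ?_, ?_⟩
    · have h1 : z₀ - (z - (α : ℂ)) = -(F z₀ - (z₀ + (α : ℂ))) := by
        rw [hFz₀]
        ring
      calc ‖Finv z - (z - (α : ℂ))‖ = ‖F z₀ - (z₀ + (α : ℂ))‖ := by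
            rw [← hz₀def, h1, norm_neg]
        _ ≤ Kc * Real.exp (-2 * Real.pi * z₀.im) := hE.1
        _ ≤ Kc * (Real.exp Real.pi * Real.exp (-2 * Real.pi * z.im)) :=
            mul_le_mul_of_nonneg_left hshift hKcpos.le
        _ ≤ 10 ^ 9 * Real.exp (-2 * Real.pi * z.im) := by
            have h2 := KcEpi_le
            have h3 : (0 : ℝ) < Real.exp (-2 * Real.pi * z.im) := Real.exp_pos _
            nlinarith
    · rw [hderiv]
      have h1 : d⁻¹ - 1 = d⁻¹ * (1 - d) := by
        field_simp
      rw [h1, norm_mul, norm_inv]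
      have h2 : ‖1 - d‖ = ‖d - 1‖ := norm_sub_rev _ _
      have h3 : ‖d‖⁻¹ ≤ 8 / 7 := by
        rw [inv_le_comm₀ (by linarith : (0:ℝ) < ‖d‖) (by norm_num)]
        linarith
      have h4 : (0 : ℝ) < Real.exp (-2 * Real.pi * z.im) := Real.exp_pos _
      have h5 := KcEpi_le
      calc ‖d‖⁻¹ * ‖1 - d‖ ≤ (8 / 7) * ‖d - 1‖ := by
            rw [h2]
            apply mul_le_mul_of_nonneg_right h3 (norm_nonneg _) |>.trans
            apply mul_le_mul_of_nonneg_left (le_refl _) (by norm_num)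
        _ ≤ (8 / 7) * (Kc * Real.exp Real.pi * Real.exp (-2 * Real.pi * z.im)) := by
            nlinarith [hdshift]
        _ ≤ 10 ^ 9 * Real.exp (-2 * Real.pi * z.im) := by
            nlinarith
  constructor
  · -- surjectivity onto the half-plane
    intro w hw
    have hw' : (10 ^ 9 : ℝ) < w.im := hw
    obtain ⟨z, hz1, hz2⟩ := hpre w (by linarith)
    have h2 := im_ge_of_close hz1
    have himc : (w - (α : ℂ)).im = w.im := by simp
    rw [himc] at h2
    exact ⟨z, by simp only [mem_setOf_eq]; linarith, hz2⟩
  refine ⟨Finv, ?_, ?_, ?_, ?_⟩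
  · intro z hz
    exact ⟨hFinv_pos z (by linarith), (hFinv_spec z (by linarith)).2⟩
  · intro x hx y hy hxy
    have h1 := (hFinv_spec x (by simp only [mem_setOf_eq] at hx; linarith)).2
    have h2 := (hFinv_spec y (by simp only [mem_setOf_eq] at hy; linarith)).2
    rw [← h1, ← h2, hxy]
  · intro z hz
    exact (hkey z hz).1
  · intro z hz
    exact ⟨(hkey z hz).2.1, (hkey z hz).2.2⟩

end
end

section
/- Let α > 0, c ∈ ℂ, β̃ ∈ ℂ, and y₀ ≤ y₁, ỹ ∈ ℝ. Suppose: (i) K is univalent on S(2, y₀) and |K(z) − (z/α + c)| ≤ 2/α for all z ∈ S(2, y₀); (ii) sup{ |K′(z) − 1/α| : z ∈ S(2, y₀), Im z ≥ Y } → 0 as Y → +∞; (iii) G is holomorphic on H_{ỹ} and G(w) − w → β̃ as Im w → +∞, uniformly in Re w; (iv) K(z) ∈ H_{ỹ} for all z ∈ S(1, y₁); (v) G* is holomorphic on S(1, y₁), G*(z) ∈ S(2, y₀) for all z ∈ S(1, y₁), and K(G*(z)) = G(K(z)) for all z ∈ S(1, y₁). Then G*(z) − z → α·β̃ as Im z →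 +∞ along z ∈ S(1, y₁); that is, the conjugated map G* has rotation number α·β̃. -/
open Set Filter Topology

set_option maxHeartbeats 1000000 in
/-- If `K` is a univalent map on the half-strip `S(2,y₀)` close to the affine map
`z ↦ z/α + c` with `K' → 1/α` at infinity, `G` is holomorphic on `H_ỹ` with
`G(w) - w → β̃` at infinity, and `G*` is a conjugate of `G` by `K` on `S(1,y₁)`, then
`G*(z) - z → α β̃` as `Im z → +∞` along `S(1,y₁)`: the conjugate has rotation number
`α β̃`. -/
theorem conjugate_rotation_number
    (α : ℝ) (c βt : ℂ) (y₀ y₁ yt : ℝ) (K G Gstar : ℂ → ℂ)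
    (hα : 0 < α) (hy : y₀ ≤ y₁)
    -- (i) K is univalent on S(2,y₀) and close to the affine map z ↦ z/α + c
    (hKdiff : DifferentiableOn ℂ K {z : ℂ | |z.re| ≤ 2 ∧ y₀ ≤ z.im})
    (hKinj : Set.InjOn K {z : ℂ | |z.re| ≤ 2 ∧ y₀ ≤ z.im})
    (hKaffine : ∀ z ∈ {z : ℂ | |z.re| ≤ 2 ∧ y₀ ≤ z.im},
      ‖K z - (z / (α : ℂ) + c)‖ ≤ 2 / α)
    -- (ii) K' → 1/α at infinity on the strip
    (hKderiv : ∀ ε : ℝ, 0 < ε → ∃ Y : ℝ, ∀ z ∈ {z : ℂ | |z.re| ≤ 2 ∧ y₀ ≤ z.im},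
      Y ≤ z.im → ‖deriv K z - ((α : ℂ))⁻¹‖ ≤ ε)
    -- (iii) G is holomorphic on H_ỹ and G(w) - w → β̃ uniformly as Im w → +∞
    (hGdiff : DifferentiableOn ℂ G {w : ℂ | yt < w.im})
    (hGrot : ∀ ε : ℝ, 0 < ε → ∃ Y : ℝ, ∀ w : ℂ, Y ≤ w.im → ‖G w - w - βt‖ ≤ ε)
    -- (iv) K maps S(1,y₁) into H_ỹ
    (hKmaps : ∀ z ∈ {z : ℂ | |z.re| ≤ 1 ∧ y₁ ≤ z.im}, yt < (K z).im)
    -- (v) G* is the conjugate of G by K on S(1,y₁)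
    (hGstardiff : DifferentiableOn ℂ Gstar {z : ℂ | |z.re| ≤ 1 ∧ y₁ ≤ z.im})
    (hGstarmaps : ∀ z ∈ {z : ℂ | |z.re| ≤ 1 ∧ y₁ ≤ z.im},
      Gstar z ∈ {z : ℂ | |z.re| ≤ 2 ∧ y₀ ≤ z.im})
    (hconj : ∀ z ∈ {z : ℂ | |z.re| ≤ 1 ∧ y₁ ≤ z.im}, K (Gstar z) = G (K z)) :
    ∀ ε : ℝ, 0 < ε → ∃ Y : ℝ, ∀ z ∈ {z : ℂ | |z.re| ≤ 1 ∧ y₁ ≤ z.im},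
      Y ≤ z.im → ‖Gstar z - z - (α : ℂ) * βt‖ ≤ ε := by
  intro ε hε
  have hα0 : (α : ℂ) ≠ 0 := by exact_mod_cast hα.ne'
  -- Lower bound for Im (K x) on the strip S(2,y₀)
  have imK : ∀ x : ℂ, |x.re| ≤ 2 → y₀ ≤ x.im → x.im / α + c.im - 2 / α ≤ (K x).im := by
    intro x h1 h2
    have h := hKaffine x ⟨h1, h2⟩
    have him : |(K x - (x / (α : ℂ) + c)).im| ≤ 2 / α :=
      le_trans (Complex.abs_im_le_norm _) h
    have h3 : (K x - (x / (α : ℂ) + c)).im = (K x).im - (x.im / α + c.im) := by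
      simp [Complex.sub_im, Complex.add_im, Complex.div_ofReal_im]
    rw [h3] at him
    have := (abs_le.mp him).1
    linarith
  -- constants
  set M : ℝ := 4 + α * (‖βt‖ + 1) with hM
  have hMpos : 0 < M := by
    have : (0 : ℝ) < 4 + α * (‖βt‖ + 1) := by positivity
    rwa [← hM] at this
  obtain ⟨YG, hYG⟩ := hGrot (ε / (2 * α)) (by positivity)
  obtain ⟨YG1, hYG1⟩ := hGrot 1 one_pos
  set ε₂ : ℝ := ε / (2 * α * (M + 1)) with hε₂def
  have hε₂pos : 0 < ε₂ := by
    have : (0:ℝ) < ε / (2 * α * (M + 1)) := by positivity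
    rwa [← hε₂def] at this
  obtain ⟨YK, hYK⟩ := hKderiv ε₂ hε₂pos
  set L : ℝ := max y₀ YK with hL
  refine ⟨max (max (α * (YG - c.im) + 2) (α * (YG1 - c.im) + 2)) (L + M + 1), ?_⟩
  rintro z ⟨hzre, hzim⟩ hYz
  set w : ℂ := Gstar z with hw
  obtain ⟨hwre, hwim⟩ := hGstarmaps z ⟨hzre, hzim⟩
  have hzre2 : |z.re| ≤ 2 := hzre.trans (by norm_num)
  have hzim0 : y₀ ≤ z.im := le_trans hy hzim
  have hKw : K w = G (K z) := hconj z ⟨hzre, hzim⟩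
  have hzL : L + M + 1 ≤ z.im := le_trans (le_max_right _ _) hYz
  -- Im K z is large
  have hKzim : ∀ Y : ℝ, α * (Y - c.im) + 2 ≤ z.im → Y ≤ (K z).im := by
    intro Y hY
    have h1 := imK z hzre2 hzim0
    have h2 : Y - c.im + 2 / α ≤ z.im / α := by
      rw [le_div_iff₀ hα]
      have h3 : (2 / α) * α = 2 := div_mul_cancel₀ _ hα.ne'
      nlinarith
    linarith
  have hKzG : YG ≤ (K z).im :=
    hKzim YG (le_trans (le_trans (le_max_left _ _) (le_max_left _ _)) hYz)
  have hKzG1 : YG1 ≤ (K z).im :=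
    hKzim YG1 (le_trans (le_trans (le_max_right _ _) (le_max_left _ _)) hYz)
  -- bound ‖w - z‖ ≤ M
  have hGKz : ‖G (K z) - K z‖ ≤ ‖βt‖ + 1 := by
    have h := hYG1 (K z) hKzG1
    calc ‖G (K z) - K z‖ = ‖(G (K z) - K z - βt) + βt‖ := by ring_nf
      _ ≤ ‖G (K z) - K z - βt‖ + ‖βt‖ := norm_add_le _ _
      _ ≤ ‖βt‖ + 1 := by linarith
  have hwz : ‖w - z‖ ≤ M := by
    have hid : (w - z) / (α : ℂ) =
        -(K w - (w / (α : ℂ) + c)) + (G (K z) - K z) + (K z - (z / (α : ℂ) + c)) := by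
      rw [← hKw]; ring
    have h1 := hKaffine w ⟨hwre, hwim⟩
    have h2 := hKaffine z ⟨hzre2, hzim0⟩
    have h3 : ‖(w - z) / (α : ℂ)‖ ≤ 2 / α + (‖βt‖ + 1) + 2 / α := by
      rw [hid]
      calc ‖-(K w - (w / (α:ℂ) + c)) + (G (K z) - K z) + (K z - (z / (α:ℂ) + c))‖
          ≤ ‖-(K w - (w / (α:ℂ) + c)) + (G (K z) - K z)‖ + ‖K z - (z / (α:ℂ) + c)‖ :=
            norm_add_le _ _
        _ ≤ ‖-(K w - (w / (α:ℂ) + c))‖ + ‖G (K z) - K z‖ + ‖K z - (z / (α:ℂ) + c)‖ := by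
            have := norm_add_le (-(K w - (w / (α:ℂ) + c))) (G (K z) - K z); linarith
        _ ≤ 2 / α + (‖βt‖ + 1) + 2 / α := by rw [norm_neg]; linarith
    have h4 : ‖(w - z) / (α : ℂ)‖ = ‖w - z‖ / α := by
      rw [norm_div, Complex.norm_real, Real.norm_eq_abs, abs_of_pos hα]
    rw [h4, div_le_iff₀ hα] at h3
    have h5 : (2 / α + (‖βt‖ + 1) + 2 / α) * α = 4 + α * (‖βt‖ + 1) := by
      field_simp; ring
    rw [h5, ← hM] at h3
    exact h3
  have hwimlb : z.im - M ≤ w.im := by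
    have h1 : |(w - z).im| ≤ M := le_trans (le_trans (Complex.abs_im_le_norm _)
      (le_of_eq rfl)) hwz
    have h2 := (abs_le.mp h1).1
    have h3 : (w - z).im = w.im - z.im := Complex.sub_im _ _
    linarith [h3 ▸ h2]
  -- The open convex set on which we apply the mean value inequality
  set U : Set ℂ := {x : ℂ | |x.re| < 2 ∧ L < x.im} with hU
  have hUopen : IsOpen U := by
    have h1 : IsOpen {x : ℂ | |x.re| < 2} :=
      isOpen_lt (by continuity) continuous_const
    have h2 : IsOpen {x : ℂ | L < x.im} := isOpen_lt continuous_const Complex.continuous_im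
    exact h1.inter h2
  have hUconv : Convex ℝ U := by
    have h1 : Convex ℝ {x : ℂ | |x.re| < 2} := by
      have : {x : ℂ | |x.re| < 2} = Complex.reLm ⁻¹' (Set.Ioo (-2) 2) := by
        ext x; simp [abs_lt, and_comm]
      rw [this]
      exact (convex_Ioo _ _).linear_preimage _
    have h2 : Convex ℝ {x : ℂ | L < x.im} := by
      have : {x : ℂ | L < x.im} = Complex.imLm ⁻¹' (Set.Ioi L) := rfl
      rw [this]
      exact (convex_Ioi _).linear_preimage _
    exact h1.inter h2
  have hUsub : U ⊆ {x : ℂ | |x.re| ≤ 2 ∧ y₀ ≤ x.im} := by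
    rintro x ⟨h1, h2⟩
    exact ⟨h1.le, le_trans (le_max_left _ _) h2.le⟩
  -- mean value inequality on U for f = K - ·/α
  set f : ℂ → ℂ := fun x => K x - x * (α : ℂ)⁻¹ with hf
  have hmvt : ∀ y ∈ U, ‖f y - f z‖ ≤ ε₂ * ‖y - z‖ := by
    have hzU : z ∈ U := by
      constructor
      · exact lt_of_le_of_lt hzre (by norm_num)
      · have : L < L + M + 1 := by linarith
        exact lt_of_lt_of_le this hzL
    intro y hy
    refine Convex.norm_image_sub_le_of_norm_hasDerivWithin_le
      (f' := fun x => deriv K x - (α : ℂ)⁻¹) ?_ ?_ hUconv hzU hy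
    · intro x hx
      have hdiff : DifferentiableAt ℂ K x :=
        hKdiff.differentiableAt (mem_nhds_iff.mpr ⟨U, hUsub, hUopen, hx⟩)
      have h1 : HasDerivAt f (deriv K x - (α : ℂ)⁻¹) x := by
        have h2 : HasDerivAt (fun x : ℂ => x * (α : ℂ)⁻¹) ((α : ℂ)⁻¹) x := by
          simpa using (hasDerivAt_id x).mul_const ((α : ℂ)⁻¹)
        exact hdiff.hasDerivAt.sub h2
      exact h1.hasDerivWithinAt
    · intro x hx
      exact hYK x (hUsub hx) (le_trans (le_max_right _ _) hx.2.le)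
  -- the segment from z to w
  have hseg_mem : ∀ t : ℝ, t ∈ Icc (0:ℝ) 1 →
      (z + t • (w - z)) ∈ {x : ℂ | |x.re| ≤ 2 ∧ y₀ ≤ x.im} := by
    intro t ⟨ht0, ht1⟩
    have hre : (z + t • (w - z)).re = (1 - t) * z.re + t * w.re := by
      simp [Complex.add_re, Complex.smul_re, Complex.sub_re]; ring
    have him : (z + t • (w - z)).im = (1 - t) * z.im + t * w.im := by
      simp [Complex.add_im, Complex.smul_im, Complex.sub_im]; ring
    constructor
    · show |(z + t • (w - z)).re| ≤ 2
      rw [hre]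
      have := abs_add_le ((1 - t) * z.re) (t * w.re)
      rw [abs_mul, abs_mul, abs_of_nonneg (by linarith : (0:ℝ) ≤ 1 - t),
        abs_of_nonneg ht0] at this
      nlinarith [abs_nonneg z.re, abs_nonneg w.re]
    · show y₀ ≤ (z + t • (w - z)).im
      rw [him]
      nlinarith
  have hseg_memU : ∀ t : ℝ, t ∈ Ico (0:ℝ) 1 → (z + t • (w - z)) ∈ U := by
    intro t ⟨ht0, ht1⟩
    have hre : (z + t • (w - z)).re = (1 - t) * z.re + t * w.re := by
      simp [Complex.add_re, Complex.smul_re, Complex.sub_re]; ring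
    have him : (z + t • (w - z)).im = (1 - t) * z.im + t * w.im := by
      simp [Complex.add_im, Complex.smul_im, Complex.sub_im]; ring
    constructor
    · show |(z + t • (w - z)).re| < 2
      rw [hre]
      have h1 := abs_add_le ((1 - t) * z.re) (t * w.re)
      rw [abs_mul, abs_mul, abs_of_nonneg (by linarith : (0:ℝ) ≤ 1 - t),
        abs_of_nonneg ht0] at h1
      nlinarith [abs_nonneg z.re, abs_nonneg w.re]
    · show L < (z + t • (w - z)).im
      rw [him]
      nlinarith
  -- estimate on the segment, then pass to the limit t → 1
  have hbound : ∀ t : ℝ, t ∈ Ico (0:ℝ) 1 → ‖f (z + t • (w - z)) - f z‖ ≤ ε₂ * M := by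
    intro t ht
    have h1 := hmvt _ (hseg_memU t ht)
    have h2 : ‖z + t • (w - z) - z‖ = |t| * ‖w - z‖ := by
      rw [add_sub_cancel_left, norm_smul, Real.norm_eq_abs]
    rw [h2, abs_of_nonneg ht.1] at h1
    calc ‖f (z + t • (w - z)) - f z‖ ≤ ε₂ * (t * ‖w - z‖) := h1
      _ ≤ ε₂ * M := by
        have h3 : t * ‖w - z‖ ≤ 1 * M :=
          mul_le_mul ht.2.le hwz (norm_nonneg _) (by norm_num)
        nlinarith [hε₂pos.le]
  have hfKz : ‖f w - f z‖ ≤ ε₂ * M := by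
    have hcont : ContinuousWithinAt (fun t : ℝ => ‖f (z + t • (w - z)) - f z‖)
        (Icc (0:ℝ) 1) 1 := by
      have hpath : Continuous (fun t : ℝ => z + t • (w - z)) := by continuity
      have hfc : ContinuousOn f {x : ℂ | |x.re| ≤ 2 ∧ y₀ ≤ x.im} :=
        (hKdiff.continuousOn).sub ((continuous_id.mul continuous_const).continuousOn)
      have hw1 : (z + (1:ℝ) • (w - z)) = w := by simp
      have hcw : ContinuousWithinAt (fun t : ℝ => f (z + t • (w - z))) (Icc (0:ℝ) 1) 1 := by
        refine ContinuousWithinAt.comp (hfc _ ?_) hpath.continuousWithinAt ?_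
        · rw [hw1]; exact ⟨hwre, hwim⟩
        · intro t ht; exact hseg_mem t ht
      exact (hcw.sub continuousWithinAt_const).norm
    have hne : (𝓝[Ico (0:ℝ) 1] (1:ℝ)).NeBot := right_nhdsWithin_Ico_neBot one_pos
    have htends : Tendsto (fun t : ℝ => ‖f (z + t • (w - z)) - f z‖)
        (𝓝[Ico (0:ℝ) 1] (1:ℝ)) (𝓝 ‖f w - f z‖) := by
      have := hcont.tendsto.mono_left (nhdsWithin_mono _ Ico_subset_Icc_self)
      simpa using this
    exact le_of_tendsto htends (eventually_nhdsWithin_of_forall hbound)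
  -- Final computation
  have hB := hYG (K z) hKzG
  have hid : w - z - (α : ℂ) * βt = (α : ℂ) * ((G (K z) - K z - βt) - (f w - f z)) := by
    rw [hf]
    simp only
    rw [← hKw]
    field_simp
    ring
  rw [hid, norm_mul, Complex.norm_real, Real.norm_eq_abs, abs_of_pos hα]
  have h6 : ‖(G (K z) - K z - βt) - (f w - f z)‖ ≤ ε / (2 * α) + ε₂ * M :=
    le_trans (norm_sub_le _ _) (add_le_add hB hfKz)
  have h7 : α * (ε / (2 * α) + ε₂ * M) ≤ ε := by
    rw [hε₂def]
    have e1 : α * (ε / (2 * α)) = ε / 2 := by field_simp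
    have e2 : α * (ε / (2 * α * (M + 1)) * M) = ε * M / (2 * (M + 1)) := by
      field_simp
    have e3 : ε * M / (2 * (M + 1)) ≤ ε / 2 := by
      rw [div_le_div_iff₀ (by positivity) (by norm_num)]
      nlinarith
    calc α * (ε / (2 * α) + ε / (2 * α * (M + 1)) * M)
        = α * (ε / (2 * α)) + α * (ε / (2 * α * (M + 1)) * M) := by ring
      _ ≤ ε / 2 + ε / 2 := by rw [e1, e2]; linarith
      _ = ε := by ring
  calc α * ‖(G (K z) - K z - βt) - (f w - f z)‖ ≤ α * (ε / (2 * α) + ε₂ * M) := by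
        nlinarith
    _ ≤ ε := h7
end

section
/- Let r > 0, let t₀ be an irrational real number, and let g be holomorphic on 𝔻_r with g(0) = 0 and g′(0) = e^{2πit₀}. Let t ∈ ℝ and let f₁, f₂ be holomorphic on 𝔻_r with f₁(0) = f₂(0) = 0 and f₁′(0) = f₂′(0) = e^{2πit}, such that each f_i commutes with g as a germ at 0 (f_i(g(z)) = g(f_i(z)) for all z in some neighborhood of 0). Then f₁ = f₂ on 𝔻_r. -/
open FormalMultilinearSeries

/-- Coefficient formula for composition of one-dimensional formal power series. -/
lemma coeff_comp_eq (q p : FormalMultilinearSeries ℂ ℂ ℂ) (n : ℕ) :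
    (q.comp p).coeff n =
      ∑ c : Composition n, q.coeff c.length * ∏ i, p.coeff (c.blocksFun i) := by
  show (q.comp p) n 1 = _
  rw [show (q.comp p) n = ∑ c : Composition n, q.compAlongComposition p c from rfl,
    ContinuousMultilinearMap.sum_apply]
  refine Finset.sum_congr rfl fun c _ => ?_
  rw [FormalMultilinearSeries.compAlongComposition_apply]
  have h1 : p.applyComposition c (1 : Fin n → ℂ) =
      fun i => (p.coeff (c.blocksFun i)) • (1 : ℂ) := by
    funext i
    simp only [FormalMultilinearSeries.applyComposition, smul_eq_mul, mul_one]
    rfl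
  rw [h1, ContinuousMultilinearMap.map_smul_univ]
  simp only [smul_eq_mul]
  rw [mul_comm]
  rfl

/-- Key induction: coefficients of a series commuting with `G` are determined by the first two,
when the multiplier `lam = G.coeff 1` satisfies `lam ^ n ≠ lam` for `n ≥ 2`. -/
lemma coeff_induction (lam : ℂ) (G p q : FormalMultilinearSeries ℂ ℂ ℂ)
    (hG1 : G.coeff 1 = lam)
    (hlam : ∀ n : ℕ, 2 ≤ n → lam ^ n ≠ lam)
    (hp : p.comp G = G.comp p) (hq : q.comp G = G.comp q)
    (h0 : p.coeff 0 = q.coeff 0) (h1 : p.coeff 1 = q.coeff 1) :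
    ∀ n, p.coeff n = q.coeff n := by
  intro n
  induction n using Nat.strong_induction_on with
  | _ n ih =>
    rcases n with _ | _ | m
    · exact h0
    · exact h1
    · set N := m + 2 with hN
      have hNpos : 0 < N := Nat.succ_pos _
      have e1 : (p.comp G).coeff N - (q.comp G).coeff N
          = (p.coeff N - q.coeff N) * lam ^ N := by
        rw [coeff_comp_eq, coeff_comp_eq, ← Finset.sum_sub_distrib]
        rw [Finset.sum_eq_single (Composition.ones N)]
        · simp only [Composition.ones_length, Composition.ones_blocksFun, hG1,
            Finset.prod_const, Finset.card_univ, Fintype.card_fin]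
          ring
        · intro c _ hc
          have hlen : c.length < N :=
            lt_of_le_of_ne c.length_le fun h => hc (Composition.eq_ones_iff_length.2 h)
          rw [ih _ hlen]; ring
        · intro h; exact absurd (Finset.mem_univ _) h
      have e2 : (G.comp p).coeff N - (G.comp q).coeff N
          = (p.coeff N - q.coeff N) * lam := by
        rw [coeff_comp_eq, coeff_comp_eq, ← Finset.sum_sub_distrib]
        rw [Finset.sum_eq_single (Composition.single N hNpos)]
        · have hs : ∀ f : ℕ → ℂ,
              ∏ i, f ((Composition.single N hNpos).blocksFun i) = f N := fun f => by
            rw [Fintype.prod_eq_single ⟨0, by simp⟩ (fun i hi => absurd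
              (Fin.ext (by have := i.2; simp at this; omega)) hi)]
            exact congrArg f (Composition.single_blocksFun hNpos _)
          rw [hs, hs, Composition.single_length, hG1]
          ring
        · intro c _ hc
          have hb : ∀ i, c.blocksFun i < N := (Composition.ne_single_iff hNpos).1 hc
          have hprod : (∏ i, p.coeff (c.blocksFun i)) = ∏ i, q.coeff (c.blocksFun i) :=
            Finset.prod_congr rfl fun i _ => ih _ (hb i)
          rw [hprod]; ring
        · intro h; exact absurd (Finset.mem_univ _) h
      rw [hp, hq] at e1
      have key : (p.coeff N - q.coeff N) * lam ^ N = (p.coeff N - q.coeff N) * lam :=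
        e1.symm.trans e2
      have hzero : (p.coeff N - q.coeff N) * (lam ^ N - lam) = 0 := by
        linear_combination key
      rcases mul_eq_zero.1 hzero with h | h
      · exact sub_eq_zero.1 h
      · exact absurd (sub_eq_zero.1 h) (hlam N (by omega))

/-- A germ commuting with a fixed germ `g` of irrational rotation number `t₀` is uniquely
determined by its rotation number: two holomorphic maps on `𝔻_r` fixing `0`, with the same
derivative `e^{2πit}` at `0`, each commuting with `g` as a germ at `0`, agree on `𝔻_r`. -/
theorem commuting_germ_unique
    (r : ℝ) (hr : 0 < r) (t₀ : ℝ) (ht₀ : Irrational t₀) (g : ℂ → ℂ)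
    (hg : DifferentiableOn ℂ g (Metric.ball 0 r)) (hg0 : g 0 = 0)
    (hgd : deriv g 0 = Complex.exp (2 * Real.pi * Complex.I * (t₀ : ℂ)))
    (t : ℝ) (f₁ f₂ : ℂ → ℂ)
    (hf₁ : DifferentiableOn ℂ f₁ (Metric.ball 0 r))
    (hf₂ : DifferentiableOn ℂ f₂ (Metric.ball 0 r))
    (hf₁0 : f₁ 0 = 0) (hf₂0 : f₂ 0 = 0)
    (hf₁d : deriv f₁ 0 = Complex.exp (2 * Real.pi * Complex.I * (t : ℂ)))
    (hf₂d : deriv f₂ 0 = Complex.exp (2 * Real.pi * Complex.I * (t : ℂ)))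
    (hc₁ : ∃ U ∈ nhds (0 : ℂ), ∀ z ∈ U, f₁ (g z) = g (f₁ z))
    (hc₂ : ∃ U ∈ nhds (0 : ℂ), ∀ z ∈ U, f₂ (g z) = g (f₂ z)) :
    Set.EqOn f₁ f₂ (Metric.ball 0 r) := by
  set lam : ℂ := Complex.exp (2 * Real.pi * Complex.I * (t₀ : ℂ)) with hlamdef
  have hopen : IsOpen (Metric.ball (0:ℂ) r) := Metric.isOpen_ball
  have h0mem : (0:ℂ) ∈ Metric.ball (0:ℂ) r := Metric.mem_ball_self hr
  -- power series at 0
  obtain ⟨G, hG⟩ := (hg.analyticOnNhd hopen 0 h0mem)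
  obtain ⟨p, hp⟩ := (hf₁.analyticOnNhd hopen 0 h0mem)
  obtain ⟨q, hq⟩ := (hf₂.analyticOnNhd hopen 0 h0mem)
  -- series-level commutation
  have hcomm : ∀ (f : ℂ → ℂ) (P : FormalMultilinearSeries ℂ ℂ ℂ),
      f 0 = 0 → HasFPowerSeriesAt f P 0 →
      (∃ U ∈ nhds (0 : ℂ), ∀ z ∈ U, f (g z) = g (f z)) → P.comp G = G.comp P := by
    intro f P hf0 hP ⟨U, hU, hUeq⟩
    have h1 : HasFPowerSeriesAt (f ∘ g) (P.comp G) 0 :=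
      HasFPowerSeriesAt.comp (by rw [hg0]; exact hP) hG
    have h2 : HasFPowerSeriesAt (g ∘ f) (G.comp P) 0 :=
      HasFPowerSeriesAt.comp (by rw [hf0]; exact hG) hP
    exact HasFPowerSeriesAt.eq_formalMultilinearSeries_of_eventually h1 h2
      (Filter.eventually_iff_exists_mem.2 ⟨U, hU, hUeq⟩)
  have hcp : p.comp G = G.comp p := hcomm f₁ p hf₁0 hp hc₁
  have hcq : q.comp G = G.comp q := hcomm f₂ q hf₂0 hq hc₂
  -- first coefficients
  have hG1 : G.coeff 1 = lam := by
    have := hG.deriv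
    rw [hgd] at this
    exact this.symm
  have h0 : p.coeff 0 = q.coeff 0 := by
    have e1 : p.coeff 0 = f₁ 0 := hp.coeff_zero 1
    have e2 : q.coeff 0 = f₂ 0 := hq.coeff_zero 1
    rw [e1, e2, hf₁0, hf₂0]
  have h1 : p.coeff 1 = q.coeff 1 := by
    have e1 : deriv f₁ 0 = p.coeff 1 := hp.deriv
    have e2 : deriv f₂ 0 = q.coeff 1 := hq.deriv
    rw [← e1, ← e2, hf₁d, hf₂d]
  -- lam is not a root of unity condition
  have hlam : ∀ n : ℕ, 2 ≤ n → lam ^ n ≠ lam := by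
    intro n hn h
    have hl0 : lam ≠ 0 := Complex.exp_ne_zero _
    have h2 : lam ^ (n - 1) = 1 := by
      have hsplit : lam ^ (n - 1) * lam = 1 * lam := by
        rw [← pow_succ, one_mul]
        rw [show n - 1 + 1 = n by omega]
        exact h
      exact mul_right_cancel₀ hl0 hsplit
    rw [hlamdef, ← Complex.exp_nat_mul] at h2
    obtain ⟨k, hk⟩ := Complex.exp_eq_one_iff.1 h2
    have h2pi : (2 * (Real.pi : ℂ) * Complex.I) ≠ 0 := by
      simp [Real.pi_ne_zero, Complex.I_ne_zero, Complex.ofReal_ne_zero]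
    have hk' : (2 * (Real.pi : ℂ) * Complex.I) * (((n - 1 : ℕ) : ℂ) * (t₀ : ℂ))
        = (2 * (Real.pi : ℂ) * Complex.I) * (k : ℂ) := by
      linear_combination hk
    have hkk : ((n - 1 : ℕ) : ℂ) * (t₀ : ℂ) = (k : ℂ) := mul_left_cancel₀ h2pi hk'
    have hkr : ((n - 1 : ℕ) : ℝ) * t₀ = (k : ℝ) := by exact_mod_cast hkk
    have hns : ((n - 1 : ℕ) : ℝ) ≠ 0 := by
      simp only [ne_eq, Nat.cast_eq_zero]
      omega
    apply ht₀
    refine ⟨(k : ℚ) / ((n - 1 : ℕ) : ℚ), ?_⟩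
    push_cast
    rw [div_eq_iff hns]
    linarith [hkr]
  -- all coefficients agree
  have hcoeff := coeff_induction lam G p q hG1 hlam hcp hcq h0 h1
  have hpq : p = q := by
    funext n
    rw [← p.mkPiRing_coeff_eq n, ← q.mkPiRing_coeff_eq n, hcoeff n]
  -- local equality
  have hev : f₁ =ᶠ[nhds (0:ℂ)] f₂ := by
    have h1 := hasFPowerSeriesAt_iff'.1 hp
    have h2 := hasFPowerSeriesAt_iff'.1 (hpq ▸ hq)
    filter_upwards [h1, h2] with z hz1 hz2
    exact hz1.unique hz2
  -- identity theorem
  exact (hf₁.analyticOnNhd hopen).eqOn_of_preconnected_of_eventuallyEq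
    (hf₂.analyticOnNhd hopen) (convex_ball (0:ℂ) r).isPreconnected h0mem hev
end

section
/- Let α be an irrational real number, and let f and g be holomorphic maps defined on a neighborhood of 0 in ℂ with f(0) = g(0) = 0 and f′(0) = e^{2πiα}, which commute as germs at 0 (f(g(z)) = g(f(z)) for all z in some neighborhood of 0). Suppose h is holomorphic on a neighborhood of 0 with h(0) = 0, h′(0) = 1, and h(f(z)) = e^{2πiα}·h(z) for all z in some neighborhood of 0. Then h(g(z)) = g′(0)·h(z) for all z in some neighborhood of 0; that is, any map linearizing f simultaneously linearizes every germ commuting with f. -/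
open Filter Topology

/-- A map linearizing a germ `f` with irrational rotation number simultaneously
linearizes every germ commuting with `f`: if `h(f(z)) = e^{2πiα} h(z)` near `0` and
`f ∘ g = g ∘ f` near `0`, then `h(g(z)) = g'(0)·h(z)` near `0`. -/
theorem linearizer_linearizes_commuting_germs
    (α : ℝ) (hα : Irrational α) (f g h : ℂ → ℂ)
    (hf : ∃ U ∈ nhds (0 : ℂ), DifferentiableOn ℂ f U)
    (hg : ∃ U ∈ nhds (0 : ℂ), DifferentiableOn ℂ g U)
    (hh : ∃ U ∈ nhds (0 : ℂ), DifferentiableOn ℂ h U)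
    (hf0 : f 0 = 0) (hg0 : g 0 = 0) (hh0 : h 0 = 0)
    (hfd : deriv f 0 = Complex.exp (2 * Real.pi * Complex.I * (α : ℂ)))
    (hhd : deriv h 0 = 1)
    (hcomm : ∃ U ∈ nhds (0 : ℂ), ∀ z ∈ U, f (g z) = g (f z))
    (hlin : ∃ U ∈ nhds (0 : ℂ), ∀ z ∈ U,
      h (f z) = Complex.exp (2 * Real.pi * Complex.I * (α : ℂ)) * h z) :
    ∃ U ∈ nhds (0 : ℂ), ∀ z ∈ U, h (g z) = deriv g 0 * h z := by
  obtain ⟨Uf, hUf, hfdo⟩ := hf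
  obtain ⟨Ug, hUg, hgdo⟩ := hg
  obtain ⟨Uh, hUh, hhdo⟩ := hh
  obtain ⟨Uc, hUc, hcm⟩ := hcomm
  obtain ⟨Ul, hUl, hl⟩ := hlin
  set lam : ℂ := Complex.exp (2 * Real.pi * Complex.I * (α : ℂ)) with hlam
  have hlamne : lam ≠ 0 := Complex.exp_ne_zero _
  set c : ℂ := deriv g 0 with hcdef
  have hfa : AnalyticAt ℂ f 0 := hfdo.analyticAt hUf
  have hga : AnalyticAt ℂ g 0 := hgdo.analyticAt hUg
  have hha : AnalyticAt ℂ h 0 := hhdo.analyticAt hUh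
  have hha' : AnalyticAt ℂ h (g 0) := by rw [hg0]; exact hha
  set D : ℂ → ℂ := fun z => h (g z) - c * h z with hD
  have hDa : AnalyticAt ℂ D 0 := (hha'.comp hga).sub (analyticAt_const.mul hha)
  -- g and f tend to 0 at 0
  have hgc : Tendsto g (𝓝 0) (𝓝 (0 : ℂ)) := by
    simpa [hg0] using hga.continuousAt.tendsto
  have hfc : Tendsto f (𝓝 0) (𝓝 (0 : ℂ)) := by
    simpa [hf0] using hfa.continuousAt.tendsto
  -- the functional equation for D
  have hfe : ∀ᶠ z in 𝓝 (0 : ℂ), D (f z) = lam * D z := by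
    have h1 : ∀ᶠ z in 𝓝 (0 : ℂ), z ∈ Uc := hUc
    have h2 : ∀ᶠ z in 𝓝 (0 : ℂ), z ∈ Ul := hUl
    have h3 : ∀ᶠ z in 𝓝 (0 : ℂ), g z ∈ Ul := hgc.eventually h2
    filter_upwards [h1, h2, h3] with z hz1 hz2 hz3
    have e1 : f (g z) = g (f z) := hcm z hz1
    have e2 : h (f z) = lam * h z := hl z hz2
    have e3 : h (f (g z)) = lam * h (g z) := hl (g z) hz3
    simp only [hD]
    rw [← e1, e3, e2]
    ring
  -- derivative facts
  have hgder : HasDerivAt g c 0 := by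
    simpa [← hcdef] using hga.differentiableAt.hasDerivAt
  have hhder : HasDerivAt h 1 0 := by
    have := hha.differentiableAt.hasDerivAt
    rwa [hhd] at this
  have hhder' : HasDerivAt h 1 (g 0) := by rw [hg0]; exact hhder
  have hhgder : HasDerivAt (fun z => h (g z)) (1 * c) 0 := hhder'.comp 0 hgder
  have hDder : HasDerivAt D (1 * c - c * 1) 0 := hhgder.sub (hhder.const_mul c)
  have hD'0 : deriv D 0 = 0 := by
    have := hDder.deriv
    rw [this]; ring
  have hD0 : D 0 = 0 := by simp [hD, hg0, hh0]
  -- main claim: D vanishes near 0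
  have key : ∀ᶠ z in 𝓝 (0 : ℂ), D z = 0 := by
    rcases eq_or_ne (analyticOrderAt D 0) ⊤ with ht | ht
    · exact analyticOrderAt_eq_top.1 ht
    · exfalso
      obtain ⟨n, hn⟩ := WithTop.ne_top_iff_exists.1 ht
      obtain ⟨u, hua, hu0, hDeq⟩ := (hDa.analyticOrderAt_eq_natCast (n := n)).1 hn.symm
      have hDeq' : ∀ᶠ z in 𝓝 (0 : ℂ), D z = z ^ n * u z := by
        filter_upwards [hDeq] with z hz
        simpa [smul_eq_mul] using hz
      -- n = 0 impossible: D 0 = 0 but u 0 ≠ 0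
      have hn0 : n ≠ 0 := by
        intro h0
        have := hDeq'.self_of_nhds
        rw [h0, hD0] at this
        simp at this
        exact hu0 this.symm
      -- derive lam ^ n = lam via limits on the punctured neighborhood
      have hfder : HasDerivAt f lam 0 := by
        have := hfa.differentiableAt.hasDerivAt
        rwa [hfd] at this
      have hslope : Tendsto (fun z => f z / z) (𝓝[≠] (0 : ℂ)) (𝓝 lam) := by
        have := hasDerivAt_iff_tendsto_slope.1 hfder
        refine this.congr (fun z => ?_)
        simp [slope_def_field, hf0]
      have hufc : Tendsto (fun z => u (f z)) (𝓝[≠] (0 : ℂ)) (𝓝 (u 0)) :=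
        hua.continuousAt.tendsto.comp (hfc.mono_left nhdsWithin_le_nhds)
      have hT1 : Tendsto (fun z => (f z / z) ^ n * u (f z)) (𝓝[≠] (0 : ℂ))
          (𝓝 (lam ^ n * u 0)) := (hslope.pow n).mul hufc
      have hT2 : Tendsto (fun z => lam * u z) (𝓝[≠] (0 : ℂ)) (𝓝 (lam * u 0)) :=
        (hua.continuousAt.tendsto.mono_left nhdsWithin_le_nhds).const_mul lam
      have heq : (fun z => (f z / z) ^ n * u (f z)) =ᶠ[𝓝[≠] (0 : ℂ)]
          (fun z => lam * u z) := by
        have hDf : ∀ᶠ z in 𝓝 (0 : ℂ), D (f z) = (f z) ^ n * u (f z) :=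
          hfc.eventually hDeq'
        filter_upwards [nhdsWithin_le_nhds hDeq', nhdsWithin_le_nhds hDf,
          nhdsWithin_le_nhds hfe, self_mem_nhdsWithin] with z h1 h2 h3 hz
        have hzne : z ≠ 0 := hz
        rw [div_pow, div_mul_eq_mul_div, div_eq_iff (pow_ne_zero n hzne)]
        linear_combination h3 - h2 + lam * h1
      have huniq : lam ^ n * u 0 = lam * u 0 :=
        tendsto_nhds_unique (hT1.congr' heq) hT2
      have hlamn : lam ^ n = lam := mul_right_cancel₀ hu0 huniq
      -- n = 1 impossible: deriv D 0 = 0 but would equal u 0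
      have hn1 : n ≠ 1 := by
        intro h1
        have hDeq1 : D =ᶠ[𝓝 (0 : ℂ)] fun z => z * u z := by
          filter_upwards [hDeq'] with z hz
          rw [hz, h1, pow_one]
        have hmul : HasDerivAt (fun z : ℂ => z * u z)
            (1 * u 0 + 0 * deriv u 0) 0 :=
          (hasDerivAt_id (0 : ℂ)).mul hua.differentiableAt.hasDerivAt
        have : deriv D 0 = 1 * u 0 + 0 * deriv u 0 := by
          rw [hDeq1.deriv_eq, hmul.deriv]
        rw [hD'0] at this
        apply hu0
        linear_combination -this
      -- so n ≥ 2 and lam ^ (n - 1) = 1, contradicting irrationality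
      have hm : n - 1 ≠ 0 := by omega
      have hpow : lam ^ (n - 1) = 1 := by
        have : lam ^ (n - 1) * lam = 1 * lam := by
          rw [one_mul, ← pow_succ]
          have : n - 1 + 1 = n := by omega
          rw [this, hlamn]
        exact mul_right_cancel₀ hlamne this
      have : Complex.exp (((n - 1 : ℕ) : ℂ) * (2 * Real.pi * Complex.I * (α : ℂ))) = 1 := by
        rw [Complex.exp_nat_mul]
        exact hpow
      obtain ⟨k, hk⟩ := Complex.exp_eq_one_iff.1 this
      have h2pi : (2 * (Real.pi : ℂ) * Complex.I) ≠ 0 := by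
        simp [Real.pi_ne_zero, Complex.I_ne_zero]
      have hka : ((n - 1 : ℕ) : ℂ) * (α : ℂ) = (k : ℂ) := by
        have : (2 * (Real.pi : ℂ) * Complex.I) * (((n - 1 : ℕ) : ℂ) * (α : ℂ) - (k : ℂ)) = 0 := by
          linear_combination hk
        rcases mul_eq_zero.1 this with h | h
        · exact absurd h h2pi
        · exact sub_eq_zero.1 h
      have hka' : ((n - 1 : ℕ) : ℝ) * α = (k : ℝ) := by
        exact_mod_cast hka
      exact (hα.natCast_mul hm).ne_int k hka'
  rw [Filter.eventually_iff_exists_mem] at key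
  obtain ⟨U, hU, hUz⟩ := key
  refine ⟨U, hU, fun z hz => ?_⟩
  have := hUz z hz
  simp only [hD] at this
  exact sub_eq_zero.1 this
end

section
/- Let r > 0 and let (f_t)_{t ∈ ℝ} be a family of injective holomorphic maps f_t : 𝔻_r → ℂ with f_{t+1} = f_t, f_t(0) = 0, and f_t′(0) = e^{2πit} for all t, such that t ↦ f_t(z) is continuous for each fixed z ∈ 𝔻_r, and f_s(f_t(z)) = f_{s+t}(z) for all s, t ∈ ℝ and all z ∈ 𝔻_r with f_t(z) ∈ 𝔻_r. Define h(z) = ∫₀¹ e^{−2πit}·f_t(z) dt. Then h is holomorphic on 𝔻_r, h(0) = 0, h′(0) = 1, and h(f_t(z)) = e^{2πit}·h(z) for all t ∈ ℝ and all z ∈ 𝔻_r with f_t(z) ∈ 𝔻_r. -/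
open Complex Metric Set MeasureTheory intervalIntegral Filter
open scoped Interval

set_option maxHeartbeats 1000000

/-- Differentiation under the interval integral, convenient form. -/
lemma param_hasDerivAt (F F' : ℝ → ℂ → ℂ) (U : Set ℂ) (hU : IsOpen U)
    (hFc : ∀ z ∈ U, ContinuousOn (fun t => F t z) (Icc 0 1))
    (hder : ∀ t ∈ Icc (0:ℝ) 1, ∀ z ∈ U, HasDerivAt (F t) (F' t z) z)
    (hbnd : ∀ z ∈ U, ∃ ε > 0, ∃ C : ℝ, ball z ε ⊆ U ∧
      ∀ t ∈ Icc (0:ℝ) 1, ∀ w ∈ ball z ε, ‖F' t w‖ ≤ C) :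
    ∀ z ∈ U, HasDerivAt (fun w => ∫ t in (0:ℝ)..1, F t w) (∫ t in (0:ℝ)..1, F' t z) z := by
  intro z hz
  obtain ⟨ε, hε, C, hballU, hC⟩ := hbnd z hz
  have huIoc : Ι (0:ℝ) 1 = Set.Ioc 0 1 := uIoc_of_le zero_le_one
  have hIccmem : ∀ {t : ℝ}, t ∈ Ι (0:ℝ) 1 → t ∈ Icc (0:ℝ) 1 := by
    intro t ht; rw [huIoc] at ht; exact Ioc_subset_Icc_self ht
  have hmeasIcc : ∀ w ∈ U, AEStronglyMeasurable (fun t => F t w)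
      (volume.restrict (Ι (0:ℝ) 1)) := by
    intro w hw
    have := (hFc w hw).aestronglyMeasurable (μ := volume) measurableSet_Icc
    exact this.mono_measure
      (Measure.restrict_mono (by rw [huIoc]; exact Ioc_subset_Icc_self) le_rfl)
  -- measurability of the derivative via difference quotients
  have hF'meas : AEStronglyMeasurable (fun t => F' t z) (volume.restrict (Ι (0:ℝ) 1)) := by
    set c : ℕ → ℂ := fun n => ((ε/2/(n+1) : ℝ) : ℂ) with hc
    have hcpos : ∀ n : ℕ, (0:ℝ) < ε/2/(n+1) := fun n => by positivity
    have hcne : ∀ n, c n ≠ 0 := fun n => by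
      simp only [hc, ne_eq, Complex.ofReal_eq_zero]; exact (hcpos n).ne'
    have hmem : ∀ n, z + c n ∈ ball z ε := by
      intro n
      simp only [mem_ball, dist_self_add_left, hc, Complex.norm_real]
      rw [Real.norm_eq_abs, abs_of_pos (hcpos n)]
      calc ε/2/(n+1) ≤ ε/2/1 :=
            div_le_div_of_nonneg_left (by positivity) one_pos (by simp)
        _ < ε := by linarith
    have hctend : Filter.Tendsto (fun n => z + c n) atTop (nhds z) := by
      have h1 : Filter.Tendsto (fun n : ℕ => (ε/2/(n+1) : ℝ)) atTop (nhds 0) := by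
        apply Filter.Tendsto.div_atTop tendsto_const_nhds
        exact tendsto_atTop_add_const_right _ _ tendsto_natCast_atTop_atTop
      have h2 : Filter.Tendsto c atTop (nhds 0) := by
        rw [show (0:ℂ) = ((0:ℝ):ℂ) by norm_num]
        exact (Complex.continuous_ofReal.tendsto 0).comp h1
      simpa using (tendsto_const_nhds (x := z)).add h2
    have hA : ∀ n : ℕ, AEStronglyMeasurable (fun (t : ℝ) => (F t (z + c n) - F t z) / c n)
        (volume.restrict (Ι (0:ℝ) 1)) := by
      intro n
      have hco : ContinuousOn (fun t => (F t (z + c n) - F t z) / c n) (Icc 0 1) :=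
        ((hFc _ (hballU (hmem n))).sub (hFc z hz)).div_const _
      exact (hco.aestronglyMeasurable (μ := volume) measurableSet_Icc).mono_measure
        (Measure.restrict_mono (by rw [huIoc]; exact Ioc_subset_Icc_self) le_rfl)
    have hB : ∀ᵐ (t : ℝ) ∂(volume.restrict (Ι (0:ℝ) 1)),
        Filter.Tendsto (fun n => (F t (z + c n) - F t z) / c n) atTop (nhds (F' t z)) := by
      filter_upwards [ae_restrict_mem measurableSet_uIoc] with t ht
      have hd := hder t (hIccmem ht) z hz
      have hslope := hasDerivAt_iff_tendsto_slope.mp hd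
      have htendzc : Filter.Tendsto (fun n => z + c n) atTop (nhdsWithin z {z}ᶜ) := by
        rw [tendsto_nhdsWithin_iff]
        refine ⟨hctend, Filter.Eventually.of_forall fun n => ?_⟩
        simp only [mem_compl_iff, mem_singleton_iff, add_eq_left]
        exact hcne n
      have hcomp := hslope.comp htendzc
      convert hcomp using 2 with n
      simp [Function.comp, slope_def_field]
    exact aestronglyMeasurable_of_tendsto_ae atTop hA hB
  -- apply the dominated differentiation theorem
  have key := intervalIntegral.hasDerivAt_integral_of_dominated_loc_of_deriv_le
      (F := fun w t => F t w) (F' := fun w t => F' t w) (x₀ := z) (s := ball z ε)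
      (bound := fun _ => C) (a := 0) (b := 1) (μ := volume) (ball_mem_nhds z hε)
      ?_ ?_ ?_ ?_ ?_ ?_
  · exact key.2
  · filter_upwards [hU.mem_nhds hz] with w hw using hmeasIcc w hw
  · apply ContinuousOn.intervalIntegrable
    rw [uIcc_of_le zero_le_one]
    exact hFc z hz
  · exact hF'meas
  · filter_upwards with t ht w hw using hC t (hIccmem ht) w hw
  · exact intervalIntegrable_const
  · filter_upwards with t ht w hw using hder t (hIccmem ht) w (hballU hw)
lemma exists_log_on_ball (a : ℂ) (s : ℝ) (hs : 0 < s) (g : ℂ → ℂ)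
    (hg : DifferentiableOn ℂ g (ball a s)) (hne : ∀ z ∈ ball a s, g z ≠ 0) :
    ∃ L : ℂ → ℂ, (∀ z ∈ ball a (s/2), DifferentiableAt ℂ L z) ∧
      (∀ z ∈ ball a (s/2), Complex.exp (L z) = g z) ∧ L a = Complex.log (g a) := by
  have hga : AnalyticOnNhd ℂ g (ball a s) := hg.analyticOnNhd isOpen_ball
  set G : ℂ → ℂ := fun w => deriv g w / g w with hGdef
  have hGana : AnalyticOnNhd ℂ G (ball a s) := (hga.deriv).div hga hne
  have hGc : ContinuousOn G (ball a s) := hGana.continuousOn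
  have hG'c : ContinuousOn (deriv G) (ball a s) := hGana.deriv.continuousOn
  have hcbsub : closedBall a (s/2) ⊆ ball a s := closedBall_subset_ball (by linarith)
  obtain ⟨K, hK⟩ := (isCompact_closedBall a (s/2)).exists_bound_of_continuousOn
    (hGc.mono hcbsub)
  obtain ⟨K', hK'⟩ := (isCompact_closedBall a (s/2)).exists_bound_of_continuousOn
    (hG'c.mono hcbsub)
  -- the inner point lemma
  have hγmem : ∀ (w : ℂ), w ∈ ball a (s/2) → ∀ σ : ℝ, σ ∈ Icc (0:ℝ) 1 →
      a + (σ:ℂ) * (w - a) ∈ ball a (s/2) := by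
    intro w hw σ hσ
    rw [mem_ball] at hw ⊢
    rw [dist_eq_norm] at hw ⊢
    have : a + (σ:ℂ) * (w - a) - a = (σ:ℂ) * (w - a) := by ring
    rw [this, norm_mul, Complex.norm_real]
    calc ‖σ‖ * ‖w - a‖ ≤ 1 * ‖w - a‖ := by
          apply mul_le_mul_of_nonneg_right _ (norm_nonneg _)
          rw [Real.norm_eq_abs, _root_.abs_of_nonneg hσ.1]; exact hσ.2
      _ < s/2 := by rw [one_mul]; exact hw
  set F : ℝ → ℂ → ℂ := fun σ w => (w - a) * G (a + (σ:ℂ) * (w - a)) with hFdef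
  set F' : ℝ → ℂ → ℂ := fun σ w =>
    G (a + (σ:ℂ) * (w - a)) + (σ:ℂ) * (w - a) * deriv G (a + (σ:ℂ) * (w - a)) with hF'def
  set L : ℂ → ℂ := fun w => Complex.log (g a) + ∫ σ in (0:ℝ)..1, F σ w with hLdef
  have hball2 : ball a (s/2) ⊆ ball a s := ball_subset_ball (by linarith)
  -- derivative of L via param_hasDerivAt
  have hLd : ∀ z ∈ ball a (s/2),
      HasDerivAt (fun w => ∫ σ in (0:ℝ)..1, F σ w) (∫ σ in (0:ℝ)..1, F' σ z) z := by
    apply param_hasDerivAt F F' (ball a (s/2)) isOpen_ball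
    · intro w hw
      apply ContinuousOn.mul continuousOn_const
      apply hGc.comp _ _
      · exact Continuous.continuousOn (by continuity)
      · intro σ hσ
        exact hball2 (hγmem w hw σ hσ)
    · intro σ hσ w hw
      have hγ : a + (σ:ℂ) * (w - a) ∈ ball a s := hball2 (hγmem w hw σ hσ)
      have h1 : HasDerivAt (fun w : ℂ => a + (σ:ℂ) * (w - a)) (σ:ℂ) w := by
        have := (((hasDerivAt_id w).sub_const a).const_mul (σ:ℂ)).const_add a
        simpa using this
      have h2 : HasDerivAt G (deriv G (a + (σ:ℂ) * (w - a))) (a + (σ:ℂ) * (w - a)) :=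
        (hGana _ hγ).differentiableAt.hasDerivAt
      have h3 := h2.comp w h1
      have h4 := ((hasDerivAt_id w).sub_const a).mul h3
      convert h4 using 1
      all_goals first | rfl | (simp [hF'def]; ring)
    · intro z hz
      set ε : ℝ := s/2 - dist z a with hεdef
      have hεpos : 0 < ε := by rw [hεdef]; rw [mem_ball] at hz; linarith
      refine ⟨ε, hεpos, K + (s/2) * K', ?_, ?_⟩
      · intro w hw
        rw [mem_ball] at hw ⊢
        calc dist w a ≤ dist w z + dist z a := dist_triangle _ _ _
          _ < ε + dist z a := by linarith
          _ = s/2 := by rw [hεdef]; ring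
      · intro σ hσ w hw
        have hwmem : w ∈ ball a (s/2) := by
          rw [mem_ball] at hw ⊢
          calc dist w a ≤ dist w z + dist z a := dist_triangle _ _ _
            _ < ε + dist z a := by linarith
            _ = s/2 := by rw [hεdef]; ring
        have hγ2 : a + (σ:ℂ) * (w - a) ∈ closedBall a (s/2) :=
          ball_subset_closedBall (hγmem w hwmem σ hσ)
        have hwa : ‖w - a‖ ≤ s/2 := by
          rw [mem_ball, dist_eq_norm] at hwmem; exact hwmem.le
        have hσn : ‖(σ:ℂ)‖ ≤ 1 := by
          rw [Complex.norm_real, Real.norm_eq_abs, _root_.abs_of_nonneg hσ.1]; exact hσ.2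
        have hKpos : (0:ℝ) ≤ K' := le_trans (norm_nonneg _)
          (hK' a (mem_closedBall_self (by positivity)))
        calc ‖F' σ w‖ ≤ ‖G (a + (σ:ℂ) * (w - a))‖ +
              ‖(σ:ℂ) * (w - a) * deriv G (a + (σ:ℂ) * (w - a))‖ := norm_add_le _ _
          _ ≤ K + (s/2) * K' := by
              apply add_le_add (hK _ hγ2)
              rw [norm_mul, norm_mul]
              calc ‖(σ:ℂ)‖ * ‖w - a‖ * ‖deriv G (a + (σ:ℂ) * (w - a))‖
                  ≤ 1 * (s/2) * K' := by
                    apply mul_le_mul (mul_le_mul hσn hwa (norm_nonneg _) zero_le_one)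
                      (hK' _ hγ2) (norm_nonneg _) (by positivity)
                _ = (s/2) * K' := by ring
  have hLdiff : ∀ z ∈ ball a (s/2), DifferentiableAt ℂ L z := by
    intro z hz
    rw [hLdef]
    exact ((hLd z hz).const_add (Complex.log (g a))).differentiableAt
  have hLa : L a = Complex.log (g a) := by
    rw [hLdef]
    have : ∀ σ ∈ uIcc (0:ℝ) 1, F σ a = 0 := by
      intro σ _; simp [hFdef]
    simp only
    rw [intervalIntegral.integral_congr this]
    simp
  refine ⟨L, hLdiff, ?_, hLa⟩
  -- exp (L z) = g z
  intro z hz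
  set c : ℂ := z - a with hcdef
  have hcnorm : ‖c‖ < s/2 := by
    rw [hcdef, ← dist_eq_norm]; exact mem_ball.1 hz
  set ι : ℝ → ℂ := fun u => c * G (a + (u:ℂ) * c) with hιdef
  have hι : ContinuousOn ι (Ioo (-2:ℝ) 2) := by
    apply ContinuousOn.mul continuousOn_const
    apply hGc.comp (Continuous.continuousOn (by continuity))
    intro u hu
    rw [mem_ball, dist_eq_norm]
    have : a + (u:ℂ) * c - a = (u:ℂ) * c := by ring
    rw [this, norm_mul, Complex.norm_real, Real.norm_eq_abs]
    rcases eq_or_ne c 0 with hc0 | hc0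
    · rw [hc0]; simpa using hs
    · calc |u| * ‖c‖ ≤ 2 * ‖c‖ := by
            apply mul_le_mul_of_nonneg_right _ (norm_nonneg _)
            rw [abs_le]; exact ⟨hu.1.le, hu.2.le⟩
        _ < 2 * (s/2) := by
            apply mul_lt_mul_of_pos_left hcnorm two_pos
        _ = s := by ring
  set φ : ℝ → ℂ := fun σ => ∫ u in (0:ℝ)..σ, ι u with hφdef
  have hIccIoo : Icc (0:ℝ) 1 ⊆ Ioo (-2:ℝ) 2 := by
    intro u hu; constructor <;> [linarith [hu.1]; linarith [hu.2] ]
  have hφd : ∀ σ ∈ Icc (0:ℝ) 1, HasDerivAt φ (ι σ) σ := by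
    intro σ hσ
    apply intervalIntegral.integral_hasDerivAt_right
    · apply ContinuousOn.intervalIntegrable
      apply hι.mono
      intro u hu
      apply hIccIoo
      rw [uIcc_of_le hσ.1] at hu
      exact ⟨hu.1, le_trans hu.2 hσ.2⟩
    · exact hι.stronglyMeasurableAtFilter (μ := volume) isOpen_Ioo _ (hIccIoo hσ)
    · exact hι.continuousAt (isOpen_Ioo.mem_nhds (hIccIoo hσ))
  set N : ℝ → ℂ := fun σ => g (a + (σ:ℂ) * c) * Complex.exp (-(Complex.log (g a) + φ σ))
    with hNdef
  have hNd : ∀ σ ∈ Icc (0:ℝ) 1, HasDerivAt N 0 σ := by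
    intro σ hσ
    have hγ : a + (σ:ℂ) * c ∈ ball a s := by
      apply hball2
      have := hγmem z hz σ hσ
      rwa [← hcdef] at this
    have hgz : HasDerivAt (fun w : ℂ => g (a + w * c)) (deriv g (a + (σ:ℂ) * c) * c) (σ:ℂ) := by
      set p : ℂ → ℂ := fun w => a + w * c with hpdef
      have h1 : HasDerivAt p c (σ:ℂ) := by
        rw [hpdef]
        simpa using ((hasDerivAt_id ((σ:ℝ):ℂ)).mul_const c).const_add a
      have h2 : HasDerivAt g (deriv g (p (σ:ℂ))) (p (σ:ℂ)) := by
        rw [hpdef]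
        exact ((hg.differentiableAt (isOpen_ball.mem_nhds hγ))).hasDerivAt
      have h3 := h2.comp ((σ:ℝ):ℂ) h1
      rw [hpdef] at h3
      exact h3
    have hgr : HasDerivAt (fun σ : ℝ => g (a + (σ:ℂ) * c))
        (deriv g (a + (σ:ℂ) * c) * c) σ := hgz.comp_ofReal
    have hexp : HasDerivAt (fun σ : ℝ => Complex.exp (-(Complex.log (g a) + φ σ)))
        (Complex.exp (-(Complex.log (g a) + φ σ)) * (-(ι σ))) σ := by
      have h3 : HasDerivAt (fun σ : ℝ => -(Complex.log (g a) + φ σ)) (-(ι σ)) σ :=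
        (((hφd σ hσ).const_add (Complex.log (g a))).neg)
      exact h3.cexp
    have hprod := hgr.mul hexp
    have hzero : deriv g (a + (σ:ℂ) * c) * c * Complex.exp (-(Complex.log (g a) + φ σ)) +
        g (a + (σ:ℂ) * c) * (Complex.exp (-(Complex.log (g a) + φ σ)) * -(ι σ)) = 0 := by
      rw [hιdef]
      simp only [hGdef]
      field_simp [hne _ hγ]
      ring
    rw [hzero] at hprod
    exact hprod
  have hcontN : ContinuousOn N (Icc (0:ℝ) 1) := fun σ hσ =>
    (hNd σ hσ).continuousAt.continuousWithinAt
  have hderN : ∀ σ ∈ Ico (0:ℝ) 1, HasDerivWithinAt N 0 (Ici σ) σ := fun σ hσ =>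
    (hNd σ (Ico_subset_Icc_self hσ)).hasDerivWithinAt
  have hNconst : N 1 = N 0 :=
    constant_of_has_deriv_right_zero hcontN hderN 1 (by norm_num)
  have hφ0 : φ 0 = 0 := by rw [hφdef]; simp
  have hN0 : N 0 = 1 := by
    rw [hNdef]
    simp only [Complex.ofReal_zero, zero_mul, add_zero, hφ0]
    rw [Complex.exp_neg, Complex.exp_log (hne a (mem_ball_self hs))]
    exact mul_inv_cancel₀ (hne a (mem_ball_self hs))
  have hLz : L z = Complex.log (g a) + φ 1 := by
    rw [hLdef, hφdef]
  have hgzeq : g z * Complex.exp (-(L z)) = 1 := by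
    have := hNconst.trans hN0
    rw [hNdef] at this
    simp only [Complex.ofReal_one, one_mul] at this
    rw [hLz]
    have hac : a + c = z := by rw [hcdef]; ring
    rwa [hac] at this
  have hexpne : Complex.exp (L z) ≠ 0 := Complex.exp_ne_zero _
  have := congrArg (fun w => w * Complex.exp (L z)) hgzeq
  simp only [one_mul] at this
  rw [mul_assoc, ← Complex.exp_add] at this
  simp only [neg_add_cancel, Complex.exp_zero, mul_one] at this
  exact this.symm
lemma lower_bound_on_ball (a : ℂ) (s : ℝ) (hs : 0 < s) (g : ℂ → ℂ)
    (hg : DifferentiableOn ℂ g (ball a s)) (hne : ∀ z ∈ ball a s, g z ≠ 0)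
    (hle : ∀ z ∈ ball a s, ‖g z‖ ≤ 1/2) :
    ∀ z ∈ ball a (s/8), Real.exp (-(3 * Real.pi)) * ‖g a‖ ^ 3 ≤ ‖g z‖ := by
  obtain ⟨L, hLdiff, hLexp, hLa⟩ := exists_log_on_ball a s hs g hg hne
  have hsub2 : ball a (s/2) ⊆ ball a s := ball_subset_ball (by linarith)
  have hamem : a ∈ ball a (s/2) := mem_ball_self (by linarith)
  have hRe : ∀ z ∈ ball a (s/2), (L z).re ≤ Real.log (1/2) := by
    intro z hz
    have h1 : Real.exp ((L z).re) = ‖g z‖ := by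
      rw [← hLexp z hz, Complex.norm_exp]
    rw [Real.le_log_iff_exp_le (by norm_num : (0:ℝ) < 1/2), h1]
    exact hle z (hsub2 hz)
  have hlog2 : Real.log (1/2) < 0 := Real.log_neg (by norm_num) (by norm_num)
  have hRe0 : ∀ z ∈ ball a (s/2), (L z).re < 0 := fun z hz =>
    lt_of_le_of_lt (hRe z hz) hlog2
  set c₀ : ℂ := L a with hc₀
  have hc₀re : c₀.re < 0 := hRe0 a hamem
  have hden : ∀ z ∈ ball a (s/2), (L z + (starRingEnd ℂ) c₀).re < 0 := by
    intro z hz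
    rw [Complex.add_re, Complex.conj_re]
    linarith [hRe0 z hz]
  have hdenne : ∀ z ∈ ball a (s/2), L z + (starRingEnd ℂ) c₀ ≠ 0 := by
    intro z hz h
    have := hden z hz
    rw [h] at this
    simp at this
  set ψ : ℂ → ℂ := fun z => (L z - c₀) / (L z + (starRingEnd ℂ) c₀) with hψ
  have hmaps : Set.MapsTo ψ (ball a (s/2)) (ball 0 1) := by
    intro z hz
    rw [mem_ball, dist_zero_right, hψ]
    simp only
    rw [norm_div, div_lt_one (norm_pos_iff.2 (hdenne z hz))]
    have hsq : Complex.normSq (L z - c₀) < Complex.normSq (L z + (starRingEnd ℂ) c₀) := by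
      simp only [Complex.normSq_apply, Complex.sub_re, Complex.sub_im, Complex.add_re,
        Complex.add_im, Complex.conj_re, Complex.conj_im]
      nlinarith [mul_pos (neg_pos.2 (hRe0 z hz)) (neg_pos.2 hc₀re)]
    rw [Complex.norm_def, Complex.norm_def]
    exact Real.sqrt_lt_sqrt (Complex.normSq_nonneg _) hsq
  have hψdiff : DifferentiableOn ℂ ψ (ball a (s/2)) := by
    intro z hz
    exact (((hLdiff z hz).sub_const c₀).div ((hLdiff z hz).add_const _)
      (hdenne z hz)).differentiableWithinAt
  have hψa : ψ a = 0 := by rw [hψ]; simp [hc₀]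
  -- Schwarz lemma
  intro z hz
  have hz2 : z ∈ ball a (s/2) := ball_subset_ball (by linarith) hz
  have hδψ : ‖ψ z‖ ≤ 1/4 := by
    have hsch := Complex.dist_le_div_mul_dist_of_mapsTo_ball hψdiff
      (by rw [hψa]; exact hmaps.mono_right ball_subset_closedBall) hz2
    rw [hψa, dist_zero_right] at hsch
    calc ‖ψ z‖ ≤ 1 / (s/2) * dist z a := hsch
      _ ≤ 1 / (s/2) * (s/8) := by
          apply mul_le_mul_of_nonneg_left (mem_ball.1 hz).le (by positivity)
      _ = 1/4 := by field_simp; ring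
  have heq : L z - c₀ = ψ z * (L z + (starRingEnd ℂ) c₀) := by
    rw [hψ]
    field_simp [hdenne z hz2]
  have hnormconj : ‖(starRingEnd ℂ) c₀‖ = ‖c₀‖ := by
    simp
  have hLbound : ‖L z‖ ≤ 3 * ‖c₀‖ := by
    have h1 : ‖L z‖ - ‖c₀‖ ≤ ‖L z - c₀‖ := norm_sub_norm_le _ _
    have h2 : ‖L z - c₀‖ ≤ 1/4 * (‖L z‖ + ‖c₀‖) := by
      rw [heq, norm_mul]
      calc ‖ψ z‖ * ‖L z + (starRingEnd ℂ) c₀‖ ≤ 1/4 * ‖L z + (starRingEnd ℂ) c₀‖ :=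
            mul_le_mul_of_nonneg_right hδψ (norm_nonneg _)
        _ ≤ 1/4 * (‖L z‖ + ‖c₀‖) := by
            apply mul_le_mul_of_nonneg_left _ (by norm_num)
            calc ‖L z + (starRingEnd ℂ) c₀‖ ≤ ‖L z‖ + ‖(starRingEnd ℂ) c₀‖ := norm_add_le _ _
              _ = ‖L z‖ + ‖c₀‖ := by rw [hnormconj]
    linarith [norm_nonneg c₀]
  have hc₀im : |c₀.im| ≤ Real.pi := by
    rw [hLa, Complex.log_im]
    exact Complex.abs_arg_le_pi _
  have hc₀bound : ‖c₀‖ ≤ -c₀.re + Real.pi := by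
    calc ‖c₀‖ ≤ |c₀.re| + |c₀.im| := Complex.norm_le_abs_re_add_abs_im c₀
      _ ≤ -c₀.re + Real.pi := by
          rw [abs_of_neg hc₀re]
          linarith
  have hrez : 3 * c₀.re - 3 * Real.pi ≤ (L z).re := by
    have h1 : -(L z).re ≤ ‖L z‖ := by
      calc -(L z).re ≤ |(L z).re| := neg_le_abs _
        _ ≤ ‖L z‖ := Complex.abs_re_le_norm _
    have h2 : ‖L z‖ ≤ 3 * (-c₀.re + Real.pi) := le_trans hLbound (by linarith)
    linarith
  have hgz : ‖g z‖ = Real.exp ((L z).re) := by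
    rw [← hLexp z hz2, Complex.norm_exp]
  have hga : ‖g a‖ = Real.exp (c₀.re) := by
    rw [hLa, Complex.log_re, Real.exp_log]
    · exact norm_pos_iff.2 (hne a (mem_ball_self hs))
  rw [hgz, hga]
  calc Real.exp (-(3 * Real.pi)) * Real.exp c₀.re ^ 3
      = Real.exp (3 * c₀.re - 3 * Real.pi) := by
        rw [← Real.exp_nat_mul]
        rw [← Real.exp_add]
        congr 1
        push_cast
        ring
    _ ≤ Real.exp ((L z).re) := Real.exp_le_exp.2 hrez



lemma flow_f0_id (r : ℝ) (hr : 0 < r) (f : ℝ → ℂ → ℂ)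
    (hdiff : ∀ t : ℝ, DifferentiableOn ℂ (f t) (Metric.ball 0 r))
    (hinj : ∀ t : ℝ, Set.InjOn (f t) (Metric.ball 0 r))
    (h0 : ∀ t : ℝ, f t 0 = 0)
    (hflow : ∀ s t : ℝ, ∀ z ∈ Metric.ball (0 : ℂ) r, f t z ∈ Metric.ball (0 : ℂ) r →
      f s (f t z) = f (s + t) z) :
    ∀ z ∈ Metric.ball (0:ℂ) r, f 0 z = z := by
  set U : Set ℂ := ball 0 r ∩ (f 0) ⁻¹' (ball 0 r) with hUdef
  have hUopen : IsOpen U :=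
    (hdiff 0).continuousOn.isOpen_inter_preimage isOpen_ball isOpen_ball
  have hU0 : (0:ℂ) ∈ U := by
    constructor
    · exact mem_ball_self hr
    · simp only [mem_preimage, h0 0]; exact mem_ball_self hr
  have hEq : Set.EqOn (f 0) id U := by
    intro z hz
    have h1 : f 0 (f 0 z) = f 0 z := by
      have := hflow 0 0 z hz.1 hz.2
      simpa using this
    exact hinj 0 hz.2 hz.1 h1
  have hana : AnalyticOnNhd ℂ (f 0) (ball 0 r) := (hdiff 0).analyticOnNhd isOpen_ball
  have hid : AnalyticOnNhd ℂ (id : ℂ → ℂ) (ball 0 r) := analyticOnNhd_id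
  have := hana.eqOn_of_preconnected_of_eventuallyEq hid
    ((convex_ball (0:ℂ) r).isPreconnected) (mem_ball_self hr)
    (Filter.eventuallyEq_of_mem (hUopen.mem_nhds hU0) hEq)
  exact fun z hz => this hz

lemma flow_bounded_near_zero (r : ℝ) (hr : 0 < r) (f : ℝ → ℂ → ℂ)
    (hper : ∀ t : ℝ, f (t + 1) = f t)
    (hdiff : ∀ t : ℝ, DifferentiableOn ℂ (f t) (Metric.ball 0 r))
    (h0 : ∀ t : ℝ, f t 0 = 0)
    (hcont : ∀ z ∈ Metric.ball (0 : ℂ) r, Continuous fun t : ℝ => f t z)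
    (hflow : ∀ s t : ℝ, ∀ z ∈ Metric.ball (0 : ℂ) r, f t z ∈ Metric.ball (0 : ℂ) r →
      f s (f t z) = f (s + t) z) :
    ∃ δ > 0, δ < r ∧ ∃ C > 0, ∀ (t : ℝ), ∀ z ∈ ball (0:ℂ) δ, ‖f t z‖ < C := by
  have hhalf : closedBall (0:ℂ) (r/2) ⊆ ball 0 r := by
    apply closedBall_subset_ball; linarith
  -- the Baire category argument
  set A : ℕ → Set ℝ := fun n => {t | ∀ z ∈ closedBall (0:ℂ) (r/2), ‖f t z‖ ≤ n} with hA
  have hclosed : ∀ n, IsClosed (A n) := by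
    intro n
    have : A n = ⋂ z ∈ closedBall (0:ℂ) (r/2), {t | ‖f t z‖ ≤ n} := by
      ext t; simp [hA, mem_iInter]
    rw [this]
    refine isClosed_biInter fun z hz => ?_
    exact isClosed_le ((hcont z (hhalf hz)).norm) continuous_const
  have hcover : (⋃ n, A n) = univ := by
    rw [eq_univ_iff_forall]
    intro t
    obtain ⟨M, hM⟩ := (isCompact_closedBall (0:ℂ) (r/2)).exists_bound_of_continuousOn
      ((hdiff t).continuousOn.mono hhalf)
    refine mem_iUnion.2 ⟨⌈M⌉₊, fun z hz => ?_⟩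
    exact (hM z hz).trans (Nat.le_ceil M)
  obtain ⟨n, hn⟩ := nonempty_interior_of_iUnion_of_closed hclosed hcover
  obtain ⟨t₀, ht₀⟩ := hn
  rw [mem_interior_iff_mem_nhds, Metric.mem_nhds_iff] at ht₀
  obtain ⟨ε, hε, hball⟩ := ht₀
  -- transport the bound to all times using the flow
  have claim : ∀ T : ℝ, ∃ δ > 0, δ < r ∧
      ∀ u ∈ ball T ε, ∀ z ∈ ball (0:ℂ) δ, ‖f u z‖ ≤ n := by
    intro T
    have hcA : ContinuousAt (f (T - t₀)) 0 :=
      (hdiff (T - t₀)).continuousOn.continuousAt (isOpen_ball.mem_nhds (mem_ball_self hr))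
    rw [Metric.continuousAt_iff] at hcA
    obtain ⟨δ₀, hδ₀, hδ⟩ := hcA (r/2) (by linarith)
    refine ⟨min δ₀ (r/2), by positivity, ?_, ?_⟩
    · calc min δ₀ (r/2) ≤ r/2 := min_le_right _ _
        _ < r := by linarith
    intro u hu z hz
    have hzr : z ∈ ball (0:ℂ) r := by
      refine ball_subset_ball ?_ hz
      calc min δ₀ (r/2) ≤ r/2 := min_le_right _ _
        _ ≤ r := by linarith
    have hft' : f (T - t₀) z ∈ closedBall (0:ℂ) (r/2) := by
      have h1 : dist z 0 < δ₀ := lt_of_lt_of_le (mem_ball.1 hz) (min_le_left _ _)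
      have h2 := hδ h1
      rw [h0 (T - t₀), dist_zero_right] at h2
      exact mem_closedBall_zero_iff.2 h2.le
    have hsA : u - (T - t₀) ∈ A n := by
      apply hball
      rw [mem_ball] at hu ⊢
      rw [Real.dist_eq] at hu ⊢
      have : u - (T - t₀) - t₀ = u - T := by ring
      rw [this]
      exact hu
    have hcomp := hflow (u - (T - t₀)) (T - t₀) z hzr (hhalf hft')
    have : u - (T - t₀) + (T - t₀) = u := by ring
    rw [this] at hcomp
    rw [← hcomp]
    exact hsA _ hft'
  choose δf hδfpos hδfr hδf using claim
  -- cover [0,1] by finitely many balls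
  have hcov : Icc (0:ℝ) 1 ⊆ ⋃ T : ℝ, ball T ε := fun t _ =>
    mem_iUnion.2 ⟨t, mem_ball_self hε⟩
  obtain ⟨fs, hfs⟩ := isCompact_Icc.elim_finite_subcover (fun T : ℝ => ball T ε)
    (fun T => isOpen_ball) hcov
  have hfsne : fs.Nonempty := by
    by_contra hcon
    rw [Finset.not_nonempty_iff_eq_empty] at hcon
    have := hfs (left_mem_Icc.2 zero_le_one)
    simp [hcon] at this
  set δ : ℝ := fs.inf' hfsne δf with hδdef
  have hδpos : 0 < δ := by
    rw [hδdef, Finset.lt_inf'_iff]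
    exact fun T _ => hδfpos T
  have hδr : δ < r := by
    obtain ⟨T, hT⟩ := hfsne
    exact lt_of_le_of_lt (Finset.inf'_le _ hT) (hδfr T)
  refine ⟨δ, hδpos, hδr, (n:ℝ) + 1, by positivity, ?_⟩
  -- first on [0,1]
  have hIcc : ∀ t ∈ Icc (0:ℝ) 1, ∀ z ∈ ball (0:ℂ) δ, ‖f t z‖ ≤ n := by
    intro t ht z hz
    obtain ⟨T, hTfs, htT⟩ := by
      have := hfs ht
      simpa only [mem_iUnion, exists_prop] using this
    refine hδf T t htT z ?_
    exact ball_subset_ball (Finset.inf'_le _ hTfs) hz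
  intro t z hz
  have hp : Function.Periodic f 1 := hper
  have hfr : f (Int.fract t) = f t := by
    rw [Int.fract]
    simpa using hp.sub_int_mul_eq (n := ⌊t⌋) (x := t)
  have hfrmem : Int.fract t ∈ Icc (0:ℝ) 1 :=
    ⟨Int.fract_nonneg t, (Int.fract_lt_one t).le⟩
  calc ‖f t z‖ = ‖f (Int.fract t) z‖ := by rw [hfr]
    _ ≤ n := hIcc _ hfrmem z hz
    _ < n + 1 := by linarith
lemma flow_locally_bounded (r : ℝ) (hr : 0 < r) (f : ℝ → ℂ → ℂ)
    (hper : ∀ t : ℝ, f (t + 1) = f t)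
    (hdiff : ∀ t : ℝ, DifferentiableOn ℂ (f t) (Metric.ball 0 r))
    (hinj : ∀ t : ℝ, Set.InjOn (f t) (Metric.ball 0 r))
    (h0 : ∀ t : ℝ, f t 0 = 0)
    (hcont : ∀ z ∈ Metric.ball (0 : ℂ) r, Continuous fun t : ℝ => f t z)
    (hflow : ∀ s t : ℝ, ∀ z ∈ Metric.ball (0 : ℂ) r, f t z ∈ Metric.ball (0 : ℂ) r →
      f s (f t z) = f (s + t) z) :
    ∀ z₀ ∈ ball (0:ℂ) r, ∃ ε > 0, ∃ C : ℝ,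
      ball z₀ ε ⊆ ball (0:ℂ) r ∧ ∀ (t : ℝ), ∀ z ∈ ball z₀ ε, ‖f t z‖ ≤ C := by
  have hf0 := flow_f0_id r hr f hdiff hinj h0 hflow
  obtain ⟨δ, hδpos, hδr, C₀, hC₀pos, hbound⟩ :=
    flow_bounded_near_zero r hr f hper hdiff h0 hcont hflow
  -- Schwarz lemma at the origin
  have hS : ∀ (t : ℝ), ∀ w ∈ ball (0:ℂ) δ, ‖f t w‖ ≤ C₀/δ * ‖w‖ := by
    intro t w hw
    have hd : DifferentiableOn ℂ (f t) (ball 0 δ) := (hdiff t).mono (ball_subset_ball hδr.le)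
    have hmapsto : Set.MapsTo (f t) (ball (0:ℂ) δ) (ball (f t 0) C₀) := by
      intro y hy
      rw [mem_ball, h0, dist_zero_right]
      exact hbound t y hy
    have := Complex.dist_le_div_mul_dist_of_mapsTo_ball hd (hmapsto.mono_right ball_subset_closedBall) hw
    rwa [h0, dist_zero_right, dist_zero_right] at this
  -- uniform lower bound away from the origin
  have hlow : ∀ ε > 0, ∃ ρ > 0, ∀ (t : ℝ), ∀ z ∈ ball (0:ℂ) r, ε ≤ ‖z‖ → ρ ≤ ‖f t z‖ := by
    intro ε hε
    refine ⟨min (δ/2) (ε*δ/(2*C₀)), by positivity, ?_⟩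
    intro t z hz hεz
    by_contra hcon
    push_neg at hcon
    have hftδ : f t z ∈ ball (0:ℂ) δ := by
      rw [mem_ball_zero_iff]
      calc ‖f t z‖ < min (δ/2) (ε*δ/(2*C₀)) := hcon
        _ ≤ δ/2 := min_le_left _ _
        _ < δ := by linarith
    have hftr : f t z ∈ ball (0:ℂ) r := by
      apply ball_subset_ball hδr.le hftδ
    have hcomp := hflow (-t) t z hz hftr
    rw [neg_add_cancel, hf0 z hz] at hcomp
    have hzle : ‖z‖ ≤ C₀/δ * ‖f t z‖ := by
      have h:= hS (-t) _ hftδ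
      rwa [hcomp] at h
    have : C₀/δ * ‖f t z‖ < ε/2 := by
      calc C₀/δ * ‖f t z‖ < C₀/δ * (ε*δ/(2*C₀)) := by
            apply mul_lt_mul_of_pos_left _ (by positivity)
            exact lt_of_lt_of_le hcon (min_le_right _ _)
        _ = ε/2 := by field_simp
    linarith
  -- pointwise bound in time
  have hpt : ∀ z ∈ ball (0:ℂ) r, ∃ M > 0, ∀ t : ℝ, ‖f t z‖ ≤ M := by
    intro z hz
    obtain ⟨M, hM⟩ := isCompact_Icc.exists_bound_of_continuousOn
      ((hcont z hz).continuousOn (s := Icc (0:ℝ) 1))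
    refine ⟨M + 1, ?_, ?_⟩
    · have := hM 0 (left_mem_Icc.2 zero_le_one)
      have h2 := norm_nonneg (f 0 z)
      linarith
    intro t
    have hp : Function.Periodic f 1 := hper
    have hfr : f (Int.fract t) = f t := by
      rw [Int.fract]
      simpa using hp.sub_int_mul_eq (n := ⌊t⌋) (x := t)
    have hfrmem : Int.fract t ∈ Icc (0:ℝ) 1 :=
      ⟨Int.fract_nonneg t, (Int.fract_lt_one t).le⟩
    calc ‖f t z‖ = ‖f (Int.fract t) z‖ := by rw [hfr]
      _ ≤ M := hM _ hfrmem
      _ ≤ M + 1 := by linarith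
  intro z₀ hz₀
  rcases eq_or_ne z₀ 0 with rfl | hz₀ne
  · exact ⟨δ, hδpos, C₀, ball_subset_ball hδr.le, fun t z hz => (hbound t z hz).le⟩
  have hz₀pos : 0 < ‖z₀‖ := norm_pos_iff.2 hz₀ne
  have hz₀r : ‖z₀‖ < r := mem_ball_zero_iff.1 hz₀
  obtain ⟨ρ, hρpos, hρ⟩ := hlow (‖z₀‖/2) (by positivity)
  set s : ℝ := min (‖z₀‖/2) ((r - ‖z₀‖)/2) with hsdef
  have hspos : 0 < s := by
    rw [hsdef]
    apply lt_min (by positivity) (by linarith)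
  have hsub : ball z₀ s ⊆ ball (0:ℂ) r := by
    intro w hw
    rw [mem_ball_zero_iff]
    calc ‖w‖ = ‖z₀ + (w - z₀)‖ := by ring_nf
      _ ≤ ‖z₀‖ + ‖w - z₀‖ := norm_add_le _ _
      _ < ‖z₀‖ + s := by
          have := mem_ball.1 hw; rw [dist_eq_norm] at this; linarith
      _ ≤ ‖z₀‖ + (r - ‖z₀‖)/2 := by
          have : s ≤ (r - ‖z₀‖)/2 := min_le_right _ _
          linarith
      _ < r := by linarith
  have hlower : ∀ w ∈ ball z₀ s, ‖z₀‖/2 ≤ ‖w‖ := by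
    intro w hw
    have h1 : ‖w - z₀‖ < s := by
      have := mem_ball.1 hw; rwa [dist_eq_norm] at this
    have h2 : s ≤ ‖z₀‖/2 := min_le_left _ _
    have h3 : ‖z₀‖ - ‖w‖ ≤ ‖w - z₀‖ := by
      calc ‖z₀‖ - ‖w‖ ≤ ‖z₀ - w‖ := norm_sub_norm_le _ _
        _ = ‖w - z₀‖ := norm_sub_rev _ _
    linarith
  have hflow_lower : ∀ (t : ℝ), ∀ w ∈ ball z₀ s, ρ ≤ ‖f t w‖ := by
    intro t w hw
    exact hρ t w (hsub hw) (hlower w hw)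
  have hfne : ∀ (t : ℝ), ∀ w ∈ ball z₀ s, f t w ≠ 0 := by
    intro t w hw
    intro hcon
    have := hflow_lower t w hw
    rw [hcon] at this
    simp at this
    linarith
  obtain ⟨M, hMpos, hM⟩ := hpt z₀ hz₀
  -- apply the lower-bound lemma to ρ / (2 f t ·)
  set c₂ : ℝ := Real.exp (-(3 * Real.pi)) * (ρ/(2*M)) ^ 3 with hc₂def
  have hc₂pos : 0 < c₂ := by rw [hc₂def]; positivity
  refine ⟨s/8, by positivity, ρ/(2*c₂), (ball_subset_ball (by linarith)).trans hsub, ?_⟩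
  intro t z hz
  set g : ℂ → ℂ := fun w => (ρ:ℂ) / (2 * f t w) with hgdef
  have hgnorm : ∀ w ∈ ball z₀ s, ‖g w‖ = ρ / (2 * ‖f t w‖) := by
    intro w hw
    rw [hgdef]
    simp only
    rw [norm_div, norm_mul]
    congr 1
    · simp [Complex.norm_real, abs_of_pos hρpos]
    · congr 1
      simp
  have hgd : DifferentiableOn ℂ g (ball z₀ s) := by
    apply DifferentiableOn.div (differentiableOn_const _)
    · exact ((hdiff t).mono hsub).const_mul 2
    · intro w hw
      simp only [ne_eq, mul_eq_zero, not_or]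
      exact ⟨two_ne_zero, hfne t w hw⟩
  have hgpos : ∀ w ∈ ball z₀ s, 0 < ‖g w‖ := by
    intro w hw
    rw [hgnorm w hw]
    have := hflow_lower t w hw
    apply div_pos hρpos
    linarith
  have hgne : ∀ w ∈ ball z₀ s, g w ≠ 0 := fun w hw => norm_pos_iff.1 (hgpos w hw)
  have hghalf : ∀ w ∈ ball z₀ s, ‖g w‖ ≤ 1/2 := by
    intro w hw
    rw [hgnorm w hw]
    have := hflow_lower t w hw
    rw [div_le_iff₀ (by linarith)]
    linarith
  have hz₀mem : z₀ ∈ ball z₀ s := mem_ball_self hspos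
  have hga : ρ/(2*M) ≤ ‖g z₀‖ := by
    rw [hgnorm z₀ hz₀mem]
    have h1 := hflow_lower t z₀ hz₀mem
    have h2 := hM t
    gcongr
    linarith
  have hlb := lower_bound_on_ball z₀ s hspos g hgd hgne hghalf z hz
  have hc₂le : c₂ ≤ ‖g z‖ := by
    calc c₂ = Real.exp (-(3 * Real.pi)) * (ρ/(2*M)) ^ 3 := hc₂def
      _ ≤ Real.exp (-(3 * Real.pi)) * ‖g z₀‖ ^ 3 := by
          apply mul_le_mul_of_nonneg_left _ (Real.exp_nonneg _)
          exact pow_le_pow_left₀ (by positivity) hga 3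
      _ ≤ ‖g z‖ := hlb
  have hzmem : z ∈ ball z₀ s := ball_subset_ball (by linarith) hz
  have hfeq : ‖f t z‖ = ρ/(2 * ‖g z‖) := by
    have h1 := hgnorm z hzmem
    have h2 := hflow_lower t z hzmem
    rw [h1]
    field_simp
  rw [hfeq]
  gcongr
/-- Averaging a periodic flow of univalent maps: if `(f_t)` is a family of injective
holomorphic maps on `𝔻_r` with `f_{t+1} = f_t`, `f_t(0) = 0`, `f_t'(0) = e^{2πit}`,
continuous in `t`, satisfying the flow property `f_s ∘ f_t = f_{s+t}` where defined,
then `h(z) = ∫₀¹ e^{-2πit} f_t(z) dt` is holomorphic on `𝔻_r` with `h(0) = 0`,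
`h'(0) = 1`, and `h(f_t(z)) = e^{2πit} h(z)` wherever `z, f_t(z) ∈ 𝔻_r`. -/
theorem averaged_flow_linearizes
    (r : ℝ) (hr : 0 < r) (f : ℝ → ℂ → ℂ)
    (hper : ∀ t : ℝ, f (t + 1) = f t)
    (hdiff : ∀ t : ℝ, DifferentiableOn ℂ (f t) (Metric.ball 0 r))
    (hinj : ∀ t : ℝ, Set.InjOn (f t) (Metric.ball 0 r))
    (h0 : ∀ t : ℝ, f t 0 = 0)
    (hder : ∀ t : ℝ, deriv (f t) 0 = Complex.exp (2 * Real.pi * Complex.I * (t : ℂ)))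
    (hcont : ∀ z ∈ Metric.ball (0 : ℂ) r, Continuous fun t : ℝ => f t z)
    (hflow : ∀ s t : ℝ, ∀ z ∈ Metric.ball (0 : ℂ) r, f t z ∈ Metric.ball (0 : ℂ) r →
      f s (f t z) = f (s + t) z) :
    DifferentiableOn ℂ
      (fun z : ℂ => ∫ t in (0 : ℝ)..1, Complex.exp (-(2 * Real.pi * Complex.I * (t : ℂ))) * f t z)
      (Metric.ball 0 r) ∧
    (∫ t in (0 : ℝ)..1, Complex.exp (-(2 * Real.pi * Complex.I * (t : ℂ))) * f t 0) = 0 ∧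
    deriv
      (fun z : ℂ => ∫ t in (0 : ℝ)..1, Complex.exp (-(2 * Real.pi * Complex.I * (t : ℂ))) * f t z)
      0 = 1 ∧
    ∀ t : ℝ, ∀ z ∈ Metric.ball (0 : ℂ) r, f t z ∈ Metric.ball (0 : ℂ) r →
      (∫ s in (0 : ℝ)..1, Complex.exp (-(2 * Real.pi * Complex.I * (s : ℂ))) * f s (f t z)) =
        Complex.exp (2 * Real.pi * Complex.I * (t : ℂ)) *
          ∫ s in (0 : ℝ)..1, Complex.exp (-(2 * Real.pi * Complex.I * (s : ℂ))) * f s z := by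
  set E : ℝ → ℂ := fun t => Complex.exp (-(2 * Real.pi * Complex.I * (t : ℂ))) with hEdef
  have hEcont : Continuous E := by
    apply Complex.continuous_exp.comp
    continuity
  have hEnorm : ∀ t : ℝ, ‖E t‖ = 1 := by
    intro t
    rw [hEdef]
    simp only [Complex.norm_exp]
    have : (-(2 * (Real.pi:ℂ) * Complex.I * (t : ℂ))).re = 0 := by simp
    rw [this, Real.exp_zero]
  -- the key derivative statement
  have hKey : ∀ z ∈ ball (0:ℂ) r, HasDerivAt (fun w => ∫ t in (0:ℝ)..1, E t * f t w)
      (∫ t in (0:ℝ)..1, E t * deriv (f t) z) z := by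
    apply param_hasDerivAt (F := fun t z => E t * f t z)
      (F' := fun t z => E t * deriv (f t) z) (U := ball (0:ℂ) r) isOpen_ball
    · intro z hz
      exact (hEcont.mul (hcont z hz)).continuousOn
    · intro t _ z hz
      exact (((hdiff t).differentiableAt (isOpen_ball.mem_nhds hz)).hasDerivAt).const_mul (E t)
    · intro z hz
      obtain ⟨ε, hε, C, hsub, hC⟩ :=
        flow_locally_bounded r hr f hper hdiff hinj h0 hcont hflow z hz
      have hCnonneg : 0 ≤ C := le_trans (norm_nonneg _) (hC 0 z (mem_ball_self hε))
      refine ⟨ε/2, by positivity, (2*C+1)/(ε/2), (ball_subset_ball (by linarith)).trans hsub, ?_⟩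
      intro t _ w hw
      have hwsub : ball w (ε/2) ⊆ ball z ε := by
        intro y hy
        rw [mem_ball] at *
        calc dist y z ≤ dist y w + dist w z := dist_triangle _ _ _
          _ < ε/2 + ε/2 := by exact add_lt_add hy hw
          _ = ε := by ring
      have hd : DifferentiableOn ℂ (f t) (ball w (ε/2)) :=
        (hdiff t).mono (hwsub.trans hsub)
      have hmaps : Set.MapsTo (f t) (ball w (ε/2)) (ball (f t w) (2*C+1)) := by
        intro y hy
        rw [mem_ball, dist_eq_norm]
        calc ‖f t y - f t w‖ ≤ ‖f t y‖ + ‖f t w‖ := norm_sub_le _ _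
          _ ≤ C + C := add_le_add (hC t y (hwsub hy))
              (hC t w (hwsub (mem_ball_self (by positivity))))
          _ < 2*C + 1 := by linarith
      have hdb := Complex.norm_deriv_le_div_of_mapsTo_ball hd (hmaps.mono_right ball_subset_closedBall) (by positivity)
      calc ‖E t * deriv (f t) w‖ = ‖E t‖ * ‖deriv (f t) w‖ := norm_mul _ _
        _ = ‖deriv (f t) w‖ := by rw [hEnorm t, one_mul]
        _ ≤ (2*C+1)/(ε/2) := hdb
  refine ⟨?_, ?_, ?_, ?_⟩
  · -- differentiability
    intro z hz
    exact (hKey z hz).differentiableAt.differentiableWithinAt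
  · -- value at 0
    have : ∀ t ∈ uIcc (0:ℝ) 1, E t * f t 0 = 0 := by
      intro t _
      rw [h0 t, mul_zero]
    rw [intervalIntegral.integral_congr this]
    simp
  · -- derivative at 0
    have h1 := (hKey 0 (mem_ball_self hr)).deriv
    rw [h1]
    have : ∀ t ∈ uIcc (0:ℝ) 1, E t * deriv (f t) 0 = 1 := by
      intro t _
      rw [hder t, hEdef]
      simp only
      rw [← Complex.exp_add]
      simp
    rw [intervalIntegral.integral_congr this]
    simp
  · -- the functional equation
    intro t z hz hfz
    set g : ℝ → ℂ := fun u => E u * f u z with hgdef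
    have hgper : Function.Periodic g 1 := by
      intro u
      have hE1 : E (u + 1) = E u := by
        rw [hEdef]
        simp only
        rw [show (-(2 * (Real.pi:ℂ) * Complex.I * ((u+1:ℝ) : ℂ)))
            = -(2 * (Real.pi:ℂ) * Complex.I * (u : ℂ)) + (-(2 * Real.pi * Complex.I)) by
          push_cast; ring]
        rw [Complex.exp_add,
          show Complex.exp (-(2 * (Real.pi:ℂ) * Complex.I)) = 1 from by
            rw [Complex.exp_neg, Complex.exp_two_pi_mul_I, inv_one],
          mul_one]
      rw [hgdef]
      simp only
      rw [hE1, hper u]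
    have hstep1 : (∫ s in (0:ℝ)..1, E s * f s (f t z)) = ∫ s in (0:ℝ)..1, E s * f (s+t) z := by
      apply intervalIntegral.integral_congr
      intro s _
      show E s * f s (f t z) = E s * f (s + t) z
      rw [hflow s t z hz hfz]
    have hfac : ∀ s : ℝ, E s * f (s+t) z
        = Complex.exp (2 * Real.pi * Complex.I * (t : ℂ)) * g (s+t) := by
      intro s
      rw [hgdef]
      simp only
      rw [hEdef]
      simp only
      rw [← mul_assoc, ← Complex.exp_add]
      congr 2
      push_cast
      ring
    have hstep2 : (∫ s in (0:ℝ)..1, E s * f (s+t) z)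
        = Complex.exp (2 * Real.pi * Complex.I * (t : ℂ)) * ∫ s in (0:ℝ)..1, g (s+t) := by
      rw [← intervalIntegral.integral_const_mul]
      apply intervalIntegral.integral_congr
      intro s _
      exact hfac s

    have hstep3 : (∫ s in (0:ℝ)..1, g (s+t)) = ∫ u in (0:ℝ)..1, g u := by
      rw [intervalIntegral.integral_comp_add_right (a := (0:ℝ)) (b := 1) g t]
      have := hgper.intervalIntegral_add_eq t 0
      rw [zero_add] at this
      rw [zero_add, show (1:ℝ) + t = t + 1 by ring]
      exact this
    rw [hstep1, hstep2, hstep3]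
end

section
/- Let N ≥ 2 be an integer and τ > 0. There exists a constant k > 0, depending only on N and τ, with the following property: if C > 0, (α_1, …, α_N) ∈ DC_N(C, τ), and w ∈ {1, …, N}, then the image under the Gauss map satisfies G(α_1, …, α_N, w) ∈ DC_N(k·C·α_w^{τ′−1}, τ), where τ′ = Nτ + N − 1. -/
/-- `1, α 1, …, α N` are linearly independent over `ℚ`. -/
def RatIndep {N : ℕ} (α : Fin N → ℝ) : Prop :=
  ∀ (q : ℤ) (p : Fin N → ℤ),
    (q : ℝ) + ∑ i, (p i : ℝ) * α i = 0 → q = 0 ∧ ∀ i, p i = 0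

/-- The Gauss map `G(α₁,…,α_N, w)`: with `α̂ᵢ = αᵢ` for `i ≠ w`, `α̂_w = 1`,
and `aᵢ` the integer closest to `α̂ᵢ / α_w`, we set `α̃ᵢ = |aᵢ α_w − α̂ᵢ| / α_w`. -/
noncomputable def gaussStep {N : ℕ} (α : Fin N → ℝ) (w : Fin N) : Fin N → ℝ :=
  fun i =>
    let x : ℝ := (if i = w then (1 : ℝ) else α i) / α w
    |(round x : ℝ) - x|

/-- Moser's Diophantine class `DC_N(C, τ)`: tuples of rationally independent irrationals
in `(0,1)` with `max_j |q α_j − p_j| ≥ C / |q|^τ` for all integers `p_j` and `q ≠ 0`. -/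
def DCN {N : ℕ} (C τ : ℝ) (α : Fin N → ℝ) : Prop :=
  (∀ i, α i ∈ Set.Ioo (0 : ℝ) 1) ∧ RatIndep α ∧
  ∀ q : ℤ, q ≠ 0 → ∀ p : Fin N → ℤ,
    ∃ j, C / |(q : ℝ)| ^ τ ≤ |(q : ℝ) * α j - (p j : ℝ)|

set_option maxHeartbeats 2000000 in
/-- The Gauss map preserves the Diophantine class: there is `k = k(N, τ) > 0` such that
`(α₁,…,α_N) ∈ DC_N(C, τ)` implies `G(α₁,…,α_N, w) ∈ DC_N(k C α_w^{τ'-1}, τ)` where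
`τ' = Nτ + N − 1`. -/
theorem gauss_preserves_diophantine (N : ℕ) (hN : 2 ≤ N) (τ : ℝ) (hτ : 0 < τ) :
    ∃ k : ℝ, 0 < k ∧
      ∀ C : ℝ, 0 < C → ∀ α : Fin N → ℝ, DCN C τ α → ∀ w : Fin N,
        DCN (k * C * α w ^ ((N : ℝ) * τ + (N : ℝ) - 1 - 1)) τ (gaussStep α w) := by
  have h52 : (0:ℝ) < (5/2 : ℝ) ^ τ := Real.rpow_pos_of_pos (by norm_num) τ
  set k : ℝ := (5 * (5/2:ℝ) ^ τ + 1)⁻¹ with hkdef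
  have hk0 : 0 < k := by positivity
  have hk1 : k ≤ 1 := by
    rw [hkdef]
    rw [inv_le_one_iff₀]
    right; nlinarith
  refine ⟨k, hk0, ?_⟩
  intro C hC α hα w
  obtain ⟨hrange, hindep, hdc⟩ := hα
  have hA0 : 0 < α w := (hrange w).1
  have hA1 : α w < 1 := (hrange w).2
  set E : ℝ := (N:ℝ) * τ + (N:ℝ) - 1 - 1 with hEdef
  set x : Fin N → ℝ := fun i => (if i = w then (1:ℝ) else α i) / α w with hxdef
  set a : Fin N → ℤ := fun i => round (x i) with hadef
  set β : Fin N → ℝ := gaussStep α w with hbdef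
  have hβ : ∀ i, β i = |(a i : ℝ) - x i| := fun i => rfl
  set s : Fin N → ℤ := fun i => if 0 ≤ (a i : ℝ) - x i then 1 else -1 with hsdef
  have hs : ∀ i, β i = (s i : ℝ) * ((a i : ℝ) - x i) := by
    intro i
    rw [hβ i, hsdef]
    by_cases h : 0 ≤ (a i : ℝ) - x i
    · simp [h, abs_of_nonneg h]
    · push_neg at h
      simp only [not_le.mpr h, if_false]
      rw [abs_of_neg h]; push_cast; ring
  have hsabs : ∀ i, |(s i : ℝ)| = 1 := by
    intro i; rw [hsdef]
    by_cases h : 0 ≤ (a i : ℝ) - x i <;> simp [h]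
  have hss : ∀ i, (s i : ℝ) * (s i : ℝ) = 1 := by
    intro i; rw [hsdef]
    by_cases h : 0 ≤ (a i : ℝ) - x i <;> simp [h]
  have hs0 : ∀ i, s i ≠ 0 := by
    intro i; rw [hsdef]
    by_cases h : 0 ≤ (a i : ℝ) - x i <;> simp [h]
  have hxA : ∀ i, x i * α w = (if i = w then (1:ℝ) else α i) := by
    intro i; rw [hxdef]; field_simp
  -- each β i is nonzero
  have hax : ∀ i, (a i : ℝ) ≠ x i := by
    intro i h
    have hid : (if i = w then (1:ℝ) else α i) = (a i : ℝ) * α w := by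
      rw [← hxA i, h]
    by_cases hi : i = w
    · subst hi
      rw [if_pos rfl] at hid
      refine one_ne_zero (hindep 1 (fun j => if j = i then -(a i) else 0) ?_).1
      have hsum : ∑ j, ((if j = i then -(a i) else 0 : ℤ) : ℝ) * α j = -(a i : ℝ) * α i := by
        rw [Finset.sum_eq_single i]
        · simp
        · intro b _ hb; simp [hb]
        · simp
      rw [hsum]; push_cast; linarith [hid]
    · rw [if_neg hi] at hid
      have h0 := hindep 0 (fun j => if j = w then a i else if j = i then -1 else 0) ?_
      · have h2 := h0.2 i
        rw [if_neg hi, if_pos rfl] at h2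
        norm_num at h2
      · have hsum : ∑ j, ((if j = w then a i else if j = i then (-1:ℤ) else 0 : ℤ) : ℝ) * α j
            = (a i : ℝ) * α w + (-1 : ℝ) * α i := by
          rw [Finset.sum_eq_add_of_mem w i (Finset.mem_univ w) (Finset.mem_univ i)
            (Ne.symm hi) ?_]
          · simp [hi, Ne.symm hi]
          · intro c _ hc
            simp [hc.1, hc.2]
        rw [hsum]; push_cast; linarith [hid]
  have hβpos : ∀ i, 0 < β i := by
    intro i
    rw [hβ i]
    exact abs_pos.mpr (sub_ne_zero.mpr (hax i))
  have hβhalf : ∀ i, β i ≤ 1/2 := by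
    intro i
    rw [hβ i, abs_sub_comm]
    exact abs_sub_round (x i)
  refine ⟨?_, ?_, ?_⟩
  · intro i
    exact ⟨hβpos i, lt_of_le_of_lt (hβhalf i) (by norm_num)⟩
  · -- RatIndep
    intro q p hrel
    set P : Fin N → ℤ := fun i => if i = w then q + ∑ j, p j * s j * a j else -(p i * s i)
      with hPdef
    have hterm : ∀ i, α w * ((p i:ℝ) * β i)
        = (p i:ℝ)*(s i:ℝ)*(a i:ℝ) * α w
          - ((p i:ℝ)*(s i:ℝ)) * (if i = w then (1:ℝ) else α i) := by
      intro i; rw [hs i, ← hxA i]; ring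
    have hsum1 : α w * ((q:ℝ) + ∑ i, (p i:ℝ) * β i)
        = (q:ℝ) * α w + (∑ i, (p i:ℝ)*(s i:ℝ)*(a i:ℝ)) * α w
          - ∑ i, ((p i:ℝ)*(s i:ℝ)) * (if i = w then (1:ℝ) else α i) := by
      rw [mul_add, Finset.mul_sum, Finset.sum_congr rfl (fun i _ => hterm i),
        Finset.sum_sub_distrib, ← Finset.sum_mul]
      ring
    have hsum2 : ∑ i, ((p i:ℝ)*(s i:ℝ)) * (if i = w then (1:ℝ) else α i)
        = (p w:ℝ)*(s w:ℝ)
          + ∑ i ∈ Finset.univ.erase w, ((p i:ℝ)*(s i:ℝ)) * α i := by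
      have h1 : ∑ i, ((p i:ℝ)*(s i:ℝ)) * (if i = w then (1:ℝ) else α i)
          = ((p w:ℝ)*(s w:ℝ)) * (if w = w then (1:ℝ) else α w)
            + ∑ i ∈ Finset.univ.erase w, ((p i:ℝ)*(s i:ℝ)) * (if i = w then (1:ℝ) else α i) :=
        (Finset.add_sum_erase _ _ (Finset.mem_univ w)).symm
      rw [h1, if_pos rfl, mul_one]
      congr 1
      refine Finset.sum_congr rfl (fun i hi => ?_)
      rw [if_neg (Finset.ne_of_mem_erase hi)]
    have hsplitP : ∑ i, (P i : ℝ) * α i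
        = (P w:ℝ) * α w + ∑ i ∈ Finset.univ.erase w, (P i:ℝ) * α i :=
      (Finset.add_sum_erase _ _ (Finset.mem_univ w)).symm
    have hPw : ((P w : ℤ):ℝ) = (q:ℝ) + ∑ j, (p j:ℝ)*(s j:ℝ)*(a j:ℝ) := by
      simp only [hPdef, if_pos rfl]
      push_cast
      ring
    have hPe : ∑ i ∈ Finset.univ.erase w, (P i:ℝ) * α i
        = - ∑ i ∈ Finset.univ.erase w, ((p i:ℝ)*(s i:ℝ)) * α i := by
      rw [← Finset.sum_neg_distrib]
      refine Finset.sum_congr rfl (fun i hi => ?_)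
      simp only [hPdef, if_neg (Finset.ne_of_mem_erase hi)]
      push_cast
      ring
    have hsum3 : ((-(p w * s w) : ℤ):ℝ) + ∑ i, (P i : ℝ) * α i
        = α w * ((q:ℝ) + ∑ i, (p i:ℝ) * β i) := by
      rw [hsum1, hsum2, hsplitP, hPw, hPe]
      push_cast
      ring
    have h0 : ((-(p w * s w) : ℤ):ℝ) + ∑ i, (P i : ℝ) * α i = 0 := by
      rw [hsum3, hrel, mul_zero]
    obtain ⟨h1, h2⟩ := hindep _ _ h0
    have hpw : p w = 0 := by
      rcases mul_eq_zero.mp (neg_eq_zero.mp h1) with h | h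
      · exact h
      · exact absurd h (hs0 w)
    have hpall : ∀ i, p i = 0 := by
      intro i
      by_cases hi : i = w
      · rw [hi]; exact hpw
      · have h3 := h2 i
        simp only [hPdef, if_neg hi] at h3
        rcases mul_eq_zero.mp (neg_eq_zero.mp h3) with h | h
        · exact h
        · exact absurd h (hs0 i)
    refine ⟨?_, hpall⟩
    have h4 := h2 w
    simp only [hPdef, if_pos rfl] at h4
    have h5 : ∑ j, p j * s j * a j = 0 :=
      Finset.sum_eq_zero (fun j _ => by rw [hpall j, zero_mul, zero_mul])
    rw [h5, add_zero] at h4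
    exact h4
  · -- DC
    intro q hq p
    by_contra hcon
    push_neg at hcon
    set δ : ℝ := k * C * α w ^ E / |(q:ℝ)| ^ τ with hδdef
    have hq1 : (1:ℝ) ≤ |(q:ℝ)| := by exact_mod_cast Int.one_le_abs hq
    have hqτ : (1:ℝ) ≤ |(q:ℝ)| ^ τ := by
      calc (1:ℝ) = 1 ^ τ := (Real.one_rpow τ).symm
      _ ≤ |(q:ℝ)| ^ τ := Real.rpow_le_rpow zero_le_one hq1 hτ.le
    have hqτ0 : (0:ℝ) < |(q:ℝ)| ^ τ := lt_of_lt_of_le one_pos hqτ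
    have hN2 : (2:ℝ) ≤ (N:ℝ) := by exact_mod_cast hN
    have hEτ : τ ≤ E := by rw [hEdef]; nlinarith
    have hE0 : (0:ℝ) ≤ E := le_trans hτ.le hEτ
    have hAE : α w ^ E ≤ α w ^ τ := Real.rpow_le_rpow_of_exponent_ge hA0 hA1.le hEτ
    have hAτ1 : α w ^ τ ≤ 1 := Real.rpow_le_one hA0.le hA1.le hτ.le
    have hAE0 : (0:ℝ) < α w ^ E := Real.rpow_pos_of_pos hA0 E
    have hAτ0 : (0:ℝ) < α w ^ τ := Real.rpow_pos_of_pos hA0 τ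
    have hC2 : C ≤ 1/2 := by
      obtain ⟨j, hj⟩ := hdc 1 one_ne_zero (fun i => round (α i))
      rw [show |((1:ℤ):ℝ)| = 1 by norm_num, Real.one_rpow, div_one] at hj
      have h2 : |((1:ℤ):ℝ) * α j - ((round (α j) : ℤ) : ℝ)| ≤ 1/2 := by
        rw [Int.cast_one, one_mul]
        exact abs_sub_round (α j)
      exact le_trans hj h2
    have hδpos : 0 < δ := by rw [hδdef]; positivity
    have hstep : k * C * α w ^ E ≤ 1/2 := by
      have hh : k * C * α w ^ E ≤ 1 * (1/2) * 1 := by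
        apply mul_le_mul (mul_le_mul hk1 hC2 hC.le zero_le_one)
          (le_trans hAE hAτ1) hAE0.le (by norm_num)
      linarith
    have hδhalf : δ ≤ 1/2 := by
      rw [hδdef]
      exact le_trans (div_le_self (by positivity) hqτ) hstep
    -- linear form estimates
    have hLi : ∀ i, |((q * s i * a i - p i : ℤ):ℝ) * α w
        - ((q * s i : ℤ):ℝ) * (if i = w then (1:ℝ) else α i)| < α w * δ := by
      intro i
      have hid : ((q * s i * a i - p i : ℤ):ℝ) * α w
          - ((q * s i : ℤ):ℝ) * (if i = w then (1:ℝ) else α i)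
          = α w * ((q:ℝ) * β i - (p i:ℝ)) := by
        rw [hs i, ← hxA i]
        push_cast
        ring
      rw [hid, abs_mul, abs_of_pos hA0]
      exact mul_lt_mul_of_pos_left (hcon i) hA0
    set m : ℤ := q * s w * a w - p w with hmdef
    have hmw : |(m:ℝ) * α w - ((q * s w : ℤ):ℝ)| < α w * δ := by
      have hh := hLi w
      rw [if_pos rfl, mul_one] at hh
      exact hh
    have hAδ : α w * δ ≤ δ := by nlinarith
    have hm0 : m ≠ 0 := by
      intro h
      rw [h] at hmw
      push_cast at hmw
      rw [zero_mul, zero_sub, abs_neg, abs_mul, hsabs w, mul_one] at hmw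
      linarith
    have hm1 : (1:ℝ) ≤ |(m:ℝ)| := by exact_mod_cast Int.one_le_abs hm0
    -- size bounds
    have haabs : ∀ i, |(a i:ℝ)| * α w ≤ 3/2 := by
      intro i
      have h1 : |(a i:ℝ) - x i| ≤ 1/2 := by
        rw [abs_sub_comm]; exact abs_sub_round (x i)
      have h2 : |(a i:ℝ)| ≤ |(a i:ℝ) - x i| + |x i| := by
        calc |(a i:ℝ)| = |((a i:ℝ) - x i) + x i| := by congr 1; ring
        _ ≤ _ := abs_add_le _ _
      have hxpos : 0 < x i := by
        rw [hxdef]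
        apply div_pos ?_ hA0
        split
        · norm_num
        · exact (hrange i).1
      rw [abs_of_pos hxpos] at h2
      have h3 : x i * α w ≤ 1 := by
        rw [hxA i]
        split
        · exact le_refl 1
        · exact (hrange i).2.le
      nlinarith
    have hpabs : ∀ i, |(p i:ℝ)| ≤ |(q:ℝ)| := by
      intro i
      have h1 : |(p i:ℝ)| ≤ |(q:ℝ) * β i| + |(q:ℝ) * β i - (p i:ℝ)| := by
        calc |(p i:ℝ)| = |(q:ℝ)*β i - ((q:ℝ)*β i - (p i:ℝ))| := by congr 1; ring
        _ ≤ _ := abs_sub _ _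
      have h2 : |(q:ℝ) * β i| ≤ |(q:ℝ)| * (1/2) := by
        rw [abs_mul, abs_of_pos (hβpos i)]
        exact mul_le_mul_of_nonneg_left (hβhalf i) (abs_nonneg _)
      have h3 := (hcon i).le
      linarith
    have hmi : ∀ i, |((q * s i * a i - p i : ℤ):ℝ)| * α w ≤ 5 * |(q:ℝ)| / 2 := by
      intro i
      have h1 : |((q * s i * a i - p i : ℤ):ℝ)| ≤ |(q:ℝ)| * |(a i:ℝ)| + |(p i:ℝ)| := by
        push_cast
        calc |(q:ℝ) * (s i:ℝ) * (a i:ℝ) - (p i:ℝ)|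
            ≤ |(q:ℝ) * (s i:ℝ) * (a i:ℝ)| + |(p i:ℝ)| := abs_sub _ _
        _ = |(q:ℝ)| * |(a i:ℝ)| + |(p i:ℝ)| := by
            rw [abs_mul, abs_mul, hsabs i, mul_one]
      have h2 := haabs i
      have h3 := hpabs i
      have h4 : |(q:ℝ)| * (|(a i:ℝ)| * α w) ≤ |(q:ℝ)| * (3/2) :=
        mul_le_mul_of_nonneg_left h2 (abs_nonneg _)
      have h5 : |(p i:ℝ)| * α w ≤ |(q:ℝ)| * 1 := by
        apply mul_le_mul h3 hA1.le hA0.le (abs_nonneg _)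
      have h6 : |((q * s i * a i - p i : ℤ):ℝ)| * α w
          ≤ (|(q:ℝ)| * |(a i:ℝ)| + |(p i:ℝ)|) * α w := mul_le_mul_of_nonneg_right h1 hA0.le
      have h7 : (|(q:ℝ)| * |(a i:ℝ)| + |(p i:ℝ)|) * α w
          = |(q:ℝ)| * (|(a i:ℝ)| * α w) + |(p i:ℝ)| * α w := by ring
      linarith
    have hmabs : |(m:ℝ)| ≤ 5 * |(q:ℝ)| / (2 * α w) := by
      rw [le_div_iff₀ (by positivity)]
      have hh := hmi w
      rw [← hmdef] at hh
      have hh2 : |(m:ℝ)| * (2 * α w) = 2 * (|(m:ℝ)| * α w) := by ring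
      linarith
    -- the approximating integers for the old tuple
    set p' : Fin N → ℤ := fun i => if i = w then q * s w
      else s i * s w * (q * s i * a i - p i) with hp'def
    have hbound : ∀ i, |(m:ℝ) * α i - (p' i:ℝ)| ≤ 5 * δ := by
      intro i
      by_cases hi : i = w
      · rw [hi]
        simp only [hp'def, if_pos rfl]
        have h2 : α w * δ ≤ 5 * δ :=
          mul_le_mul_of_nonneg_right (by linarith : α w ≤ 5) hδpos.le
        linarith [hmw]
      · have h1 := hLi i
        rw [if_neg hi] at h1
        have hkey : ((q:ℝ) * (s i:ℝ)) * ((m:ℝ) * α i - ((s i * s w * (q * s i * a i - p i) : ℤ):ℝ))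
            = ((q * s i * a i - p i : ℤ):ℝ) * ((m:ℝ) * α w - ((q * s w:ℤ):ℝ))
              - (m:ℝ) * (((q * s i * a i - p i : ℤ):ℝ) * α w - ((q * s i:ℤ):ℝ) * α i) := by
          have hs2 : (s i:ℝ) * (s i:ℝ) = 1 := hss i
          push_cast
          linear_combination (-(q:ℝ) * (s w:ℝ) * ((q:ℝ) * (s i:ℝ) * (a i:ℝ) - (p i:ℝ))) * hs2
        have h2 : |(q:ℝ)| * |(m:ℝ) * α i - ((s i * s w * (q * s i * a i - p i) : ℤ):ℝ)|
            ≤ |((q * s i * a i - p i : ℤ):ℝ)| * (α w * δ) + |(m:ℝ)| * (α w * δ) := by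
          calc |(q:ℝ)| * |(m:ℝ) * α i - ((s i * s w * (q * s i * a i - p i) : ℤ):ℝ)|
              = |(q:ℝ) * (s i:ℝ)| * |(m:ℝ) * α i - ((s i * s w * (q * s i * a i - p i) : ℤ):ℝ)| := by
                rw [abs_mul, hsabs i, mul_one]
          _ = |((q:ℝ) * (s i:ℝ)) * ((m:ℝ) * α i - ((s i * s w * (q * s i * a i - p i) : ℤ):ℝ))| :=
                (abs_mul _ _).symm
          _ = |((q * s i * a i - p i : ℤ):ℝ) * ((m:ℝ) * α w - ((q * s w:ℤ):ℝ))
              - (m:ℝ) * (((q * s i * a i - p i : ℤ):ℝ) * α w - ((q * s i:ℤ):ℝ) * α i)| := by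
                rw [hkey]
          _ ≤ |((q * s i * a i - p i : ℤ):ℝ) * ((m:ℝ) * α w - ((q * s w:ℤ):ℝ))|
              + |(m:ℝ) * (((q * s i * a i - p i : ℤ):ℝ) * α w - ((q * s i:ℤ):ℝ) * α i)| :=
                abs_sub _ _
          _ ≤ _ := by
                rw [abs_mul, abs_mul]
                exact add_le_add
                  (mul_le_mul_of_nonneg_left hmw.le (abs_nonneg _))
                  (mul_le_mul_of_nonneg_left h1.le (abs_nonneg _))
        have h3 : |((q * s i * a i - p i : ℤ):ℝ)| * (α w * δ) ≤ (5 * |(q:ℝ)| / 2) * δ := by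
          have hh := mul_le_mul_of_nonneg_right (hmi i) hδpos.le
          calc |((q * s i * a i - p i : ℤ):ℝ)| * (α w * δ)
              = |((q * s i * a i - p i : ℤ):ℝ)| * α w * δ := by ring
          _ ≤ _ := hh
        have h4 : |(m:ℝ)| * (α w * δ) ≤ (5 * |(q:ℝ)| / 2) * δ := by
          have hh := mul_le_mul_of_nonneg_right (hmi w) hδpos.le
          rw [← hmdef] at hh
          calc |(m:ℝ)| * (α w * δ) = |(m:ℝ)| * α w * δ := by ring
          _ ≤ _ := hh
        have h5 : |(q:ℝ)| * |(m:ℝ) * α i - ((s i * s w * (q * s i * a i - p i) : ℤ):ℝ)|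
            ≤ |(q:ℝ)| * (5 * δ) := by
          calc |(q:ℝ)| * |(m:ℝ) * α i - ((s i * s w * (q * s i * a i - p i) : ℤ):ℝ)|
              ≤ (5 * |(q:ℝ)| / 2) * δ + (5 * |(q:ℝ)| / 2) * δ := by linarith
          _ = |(q:ℝ)| * (5 * δ) := by ring
        have h6 := le_of_mul_le_mul_left h5 (lt_of_lt_of_le one_pos hq1)
        simp only [hp'def, if_neg hi]
        exact h6
    obtain ⟨j, hj⟩ := hdc m hm0 p'
    have hmτ : |(m:ℝ)| ^ τ ≤ (5 * |(q:ℝ)| / (2 * α w)) ^ τ :=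
      Real.rpow_le_rpow (abs_nonneg _) hmabs hτ.le
    have hmτ0 : (0:ℝ) < |(m:ℝ)| ^ τ := Real.rpow_pos_of_pos (by linarith) τ
    have hCle : C ≤ 5 * δ * |(m:ℝ)| ^ τ := by
      rw [div_le_iff₀ hmτ0] at hj
      calc C ≤ |(m:ℝ) * α j - (p' j:ℝ)| * |(m:ℝ)| ^ τ := hj
      _ ≤ 5 * δ * |(m:ℝ)| ^ τ := mul_le_mul_of_nonneg_right (hbound j) hmτ0.le
    have hpow : (5 * |(q:ℝ)| / (2 * α w)) ^ τ = (5/2:ℝ)^τ * |(q:ℝ)|^τ / (α w)^τ := by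
      rw [show 5 * |(q:ℝ)| / (2 * α w) = ((5/2) * |(q:ℝ)|) / (α w) by ring]
      rw [Real.div_rpow (by positivity) hA0.le, Real.mul_rpow (by norm_num) (abs_nonneg _)]
    have hfinal : C ≤ 5 * (5/2:ℝ)^τ * k * C * (α w ^ E / α w ^ τ) := by
      have h7 : 5 * δ * |(m:ℝ)| ^ τ ≤ 5 * δ * ((5/2:ℝ)^τ * |(q:ℝ)|^τ / (α w)^τ) := by
        rw [← hpow]
        exact mul_le_mul_of_nonneg_left hmτ (by positivity)
      have h8 : 5 * δ * ((5/2:ℝ)^τ * |(q:ℝ)|^τ / (α w)^τ)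
          = 5 * (5/2:ℝ)^τ * k * C * (α w ^ E / α w ^ τ) := by
        rw [hδdef]
        field_simp
      linarith [hCle, h7, h8.symm.le, h8.le]
    have hEA : α w ^ E / α w ^ τ ≤ 1 := by
      rw [div_le_one hAτ0]
      exact hAE
    have hfinal2 : C ≤ 5 * (5/2:ℝ)^τ * k * C := by
      have h9 : (0:ℝ) ≤ 5 * (5/2:ℝ)^τ * k * C := by positivity
      nlinarith
    have hck : (5 * (5/2:ℝ)^τ + 1) * k = 1 := by
      rw [hkdef]
      field_simp
    have hlt : 5 * (5/2:ℝ)^τ * k < 1 := by nlinarith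
    nlinarith [mul_lt_mul_of_pos_right hlt hC]
end

section
/- Let N ≥ 2 be an integer and τ > 0. There exists a constant k > 0, depending only on N and τ, with the following property: if C > 0, (α_1, …, α_N) ∈ DC_N(C, τ), w ∈ {1, …, N}, and (α̃_1, …, α̃_N) = G(α_1, …, α_N, w), then there exists an index j ∈ {1, …, N} such that α̃_j ≥ k·C·α_w^τ. -/
/-- Under Moser's Diophantine condition, some coordinate of the image of the Gauss map is
not too small: there is `k = k(N, τ) > 0` such that if `(α₁,…,α_N) ∈ DC_N(C, τ)` and
`(α̃₁,…,α̃_N) = G(α₁,…,α_N, w)`, then `α̃_j ≥ k C α_w^τ` for some index `j`. -/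
theorem gauss_image_coordinate_lower_bound (N : ℕ) (hN : 2 ≤ N) (τ : ℝ) (hτ : 0 < τ) :
    ∃ k : ℝ, 0 < k ∧
      ∀ C : ℝ, 0 < C → ∀ α : Fin N → ℝ, DCN C τ α → ∀ w : Fin N,
        ∃ j, k * C * α w ^ τ ≤ gaussStep α w j := by
  refine ⟨(2/3 : ℝ) ^ τ / 3, by positivity, ?_⟩
  intro C hC α hα w
  obtain ⟨hIoo, _, hDC⟩ := hα
  obtain ⟨hw0, hw1⟩ := hIoo w
  set x : Fin N → ℝ := fun i => (if i = w then (1:ℝ) else α i) / α w with hxdef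
  set a : Fin N → ℤ := fun i => round (x i) with hadef
  have hg : ∀ i, gaussStep α w i = |(a i : ℝ) - x i| := fun i => rfl
  have hgnn : ∀ i, 0 ≤ gaussStep α w i := fun i => by rw [hg]; exact abs_nonneg _
  have hround : ∀ i, |x i - (a i : ℝ)| ≤ 1/2 := fun i => abs_sub_round (x i)
  have hwne : α w ≠ 0 := ne_of_gt hw0
  -- α w * g i = |a i * α w - α̂ i|
  have hmul : ∀ i, α w * gaussStep α w i
      = |(a i : ℝ) * α w - (if i = w then (1:ℝ) else α i)| := by
    intro i
    have key : (a i : ℝ) * α w - (if i = w then (1:ℝ) else α i)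
        = α w * ((a i : ℝ) - x i) := by
      have hx : x i = (if i = w then (1:ℝ) else α i) / α w := rfl
      rw [hx]; field_simp
    rw [hg, key, abs_mul, abs_of_pos hw0]
  -- bounds on a w
  have hxw : x w = 1 / α w := by simp [hxdef]
  have hxw1 : 1 < x w := by
    rw [hxw, lt_div_iff₀ hw0]; linarith
  have haw_lb : (1:ℝ) ≤ (a w : ℝ) := by
    have h := (abs_le.1 (hround w)).2
    have h' : (1/2 : ℝ) < (a w : ℝ) := by linarith
    have : (0:ℤ) < a w := by exact_mod_cast lt_of_le_of_lt (by norm_num : (0:ℝ) ≤ 1/2) h'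
    exact_mod_cast this
  have hawne : (a w : ℤ) ≠ 0 := by
    have : (0:ℤ) < a w := by exact_mod_cast lt_of_lt_of_le zero_lt_one haw_lb
    omega
  have haw_mul : (a w : ℝ) * α w ≤ 3/2 := by
    have h := (abs_le.1 (hround w)).1
    have hx : (a w : ℝ) ≤ x w + 1/2 := by linarith
    have h2 : (a w : ℝ) * α w ≤ (x w + 1/2) * α w :=
      mul_le_mul_of_nonneg_right hx (le_of_lt hw0)
    have hxe : x w * α w = 1 := by rw [hxw]; field_simp
    nlinarith
  -- bound |a i| * α w ≤ 3/2 for i ≠ w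
  have hai_mul : ∀ i, i ≠ w → |(a i : ℝ)| * α w ≤ 3/2 := by
    intro i hi
    have hxi : x i = α i / α w := by simp [hxdef, hi]
    have h1 : |(a i : ℝ)| ≤ |x i| + 1/2 := by
      have h0 := abs_sub_abs_le_abs_sub ((a i : ℝ)) (x i)
      have h2 : |(a i : ℝ) - x i| ≤ 1/2 := by rw [abs_sub_comm]; exact hround i
      linarith
    have hio := hIoo i
    have hxia : |x i| * α w = α i := by
      rw [hxi, abs_div, abs_of_pos hio.1, abs_of_pos hw0]
      field_simp
    have h3 : |(a i : ℝ)| * α w ≤ (|x i| + 1/2) * α w :=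
      mul_le_mul_of_nonneg_right h1 (le_of_lt hw0)
    nlinarith [hio.2, hio.1]
  -- apply the Diophantine condition
  obtain ⟨j, hj⟩ := hDC (a w) hawne (fun i => if i = w then (1:ℤ) else a i)
  -- key: C / |a w|^τ ≥ (2/3)^τ * C * α w ^ τ
  have hawpos : (0:ℝ) < (a w : ℝ) := lt_of_lt_of_le zero_lt_one haw_lb
  have hawabs : |((a w : ℤ) : ℝ)| = (a w : ℝ) := abs_of_pos hawpos
  have haw_ub : (a w : ℝ) ≤ ((2/3) * α w)⁻¹ := by
    rw [← one_div, le_div_iff₀ (by linarith)]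
    linarith [haw_mul]
  have hkey : (2/3 : ℝ)^τ * C * α w ^ τ ≤ C / |((a w : ℤ) : ℝ)| ^ τ := by
    rw [hawabs]
    have h1 : (a w : ℝ) ^ τ ≤ (((2/3) * α w)⁻¹) ^ τ :=
      Real.rpow_le_rpow (le_of_lt hawpos) haw_ub (le_of_lt hτ)
    have h2 : (((2/3 : ℝ) * α w)⁻¹) ^ τ = (((2/3) * α w) ^ τ)⁻¹ :=
      Real.inv_rpow (by positivity) τ
    have h3 : ((2/3 : ℝ) * α w) ^ τ = (2/3)^τ * α w ^ τ :=
      Real.mul_rpow (by norm_num) (le_of_lt hw0)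
    have hpos1 : (0:ℝ) < (a w : ℝ) ^ τ := Real.rpow_pos_of_pos hawpos τ
    calc (2/3 : ℝ)^τ * C * α w ^ τ = C * ((2/3)^τ * α w ^ τ) := by ring
      _ = C / (((2/3) * α w) ^ τ)⁻¹ := by
          rw [h3, div_eq_mul_inv C, inv_inv]
      _ ≤ C / (a w : ℝ) ^ τ := by
          apply div_le_div_of_nonneg_left (le_of_lt hC) hpos1
          rw [← h2]; exact h1
  have hK : (2/3:ℝ)^τ / 3 * C * α w ^ τ = ((2/3:ℝ)^τ * C * α w ^ τ) / 3 := by ring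
  have hT : (0:ℝ) ≤ (2/3:ℝ)^τ * C * α w ^ τ := by positivity
  rcases eq_or_ne j w with hjw | hjw
  · -- case j = w : |a_w α_w - 1| = α_w g_w ≤ g_w
    refine ⟨w, ?_⟩
    rw [if_pos hjw, hjw] at hj
    push_cast at hj
    have h1 : α w * gaussStep α w w = |(a w : ℝ) * α w - 1| := by
      have := hmul w; simpa using this
    have h2 : α w * gaussStep α w w ≤ gaussStep α w w := by
      nlinarith [hgnn w]
    have h3 : C / |((a w : ℤ) : ℝ)| ^ τ ≤ gaussStep α w w := by
      rw [h1] at h2; linarith [hj, h2]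
    rw [hK]
    linarith [hkey, h3, hT]
  · -- case j ≠ w
    rw [if_neg hjw] at hj
    push_cast at hj
    set gj := gaussStep α w j with hgj
    set gw := gaussStep α w w with hgw
    have hmw : α w * gw = |(a w : ℝ) * α w - 1| := by
      have := hmul w; simpa [hgw] using this
    have hmj : α w * gj = |(a j : ℝ) * α w - α j| := by
      have := hmul j; simpa [hgj, hjw] using this
    have hident : |(a w : ℝ) * α j - (a j : ℝ)|
        ≤ (a w : ℝ) * α w * gj + |(a j : ℝ)| * (α w * gw) := by
      have heq : (a w : ℝ) * α j - (a j : ℝ)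
          = (a w : ℝ) * (α j - (a j : ℝ) * α w) + (a j : ℝ) * ((a w : ℝ) * α w - 1) := by
        ring
      calc |(a w : ℝ) * α j - (a j : ℝ)|
          ≤ |(a w : ℝ) * (α j - (a j : ℝ) * α w)| + |(a j : ℝ) * ((a w : ℝ) * α w - 1)| := by
            rw [heq]; exact abs_add_le _ _
        _ = (a w : ℝ) * |α j - (a j : ℝ) * α w| + |(a j : ℝ)| * |(a w : ℝ) * α w - 1| := by
            rw [abs_mul, abs_mul, abs_of_pos hawpos]
        _ = (a w : ℝ) * (α w * gj) + |(a j : ℝ)| * (α w * gw) := by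
            rw [hmj, hmw, abs_sub_comm]
        _ = (a w : ℝ) * α w * gj + |(a j : ℝ)| * (α w * gw) := by ring
    have hb : |(a w : ℝ) * α j - (a j : ℝ)| ≤ (3/2) * gj + (3/2) * gw := by
      have h1 : (a w : ℝ) * α w * gj ≤ (3/2) * gj :=
        mul_le_mul_of_nonneg_right haw_mul (hgnn j)
      have h2 : |(a j : ℝ)| * (α w * gw) ≤ (3/2) * gw := by
        have h4 := mul_le_mul_of_nonneg_right (hai_mul j hjw) (hgnn w)
        calc |(a j : ℝ)| * (α w * gw) = (|(a j : ℝ)| * α w) * gw := by ring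
          _ ≤ (3/2) * gw := h4
      linarith
    have hM : (2/3:ℝ)^τ * C * α w ^ τ ≤ 3 * max gj gw := by
      have h1 : (3/2:ℝ) * gj + (3/2) * gw ≤ 3 * max gj gw := by
        have ha := le_max_left gj gw
        have hbb := le_max_right gj gw
        linarith
      linarith [hkey, hj, hb]
    rcases le_total gj gw with h | h
    · refine ⟨w, ?_⟩
      rw [max_eq_right h] at hM
      rw [hK]; linarith
    · refine ⟨j, ?_⟩
      rw [max_eq_left h] at hM
      rw [hK]; linarith
end
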